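/- Let X be a Banach space, K ⊆ X* a nonempty weak*-compact set, ξ an ordinal, D a weak neighborhood basis at 0 in X directed by reverse inclusion, and Ω_ξ = Γ_ξD. Suppose σ, ε, a > 0 with a/σ > ε, (x_t)_{t∈Ω_ξ} ⊆ σB_X is normally weakly null, and (x*_t)_{t∈MAX(Ω_ξ)} ⊆ K satisfies Re x*_t(x_s) ≥ a for every s ⪯ t ∈ MAX(Ω_ξ). Then s_ε^{ω^ξ}(K) ∩ (the weak*-closure of {x*_t : t ∈ MAX(Ω_ξ)}) is nonempty. -/

import Mathlib

/-!
Common definitions formalizing the notions of Causey, "Power type ξ-asymptotically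
uniformly smooth norms": Szlenk derivations and indices, B-trees, weakly null and
weak*-null collections, the moduli ρ_ξ and δ_ξ^{w*}, the trees Γ_ξ, Γ_{ξ,n}, Γ_{ξ,∞}
with their levels and probability weights, and related quantities.
-/

noncomputable section

open Ordinal Set Metric Filter NormedSpace Pointwise
open scoped Classical ENNReal Topology

universe u v

namespace SzlenkPaper

/-! ### B-trees of finite sequences

Finite sequences in `Λ` are modelled by `List Λ`; `s <+: t` (list prefix) is the
initial segment order `s ⪯ t`, and the proper initial segment order `s ≺ t` is
`s <+: t ∧ s ≠ t`. -/

/-- `B` is a B-tree : a set of nonempty finite sequences which, after adding the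
empty sequence, is downward closed under initial segments. -/
def IsBTree {Λ : Type v} (B : Set (List Λ)) : Prop :=
  [] ∉ B ∧ ∀ t ∈ B, ∀ s : List Λ, s ≠ [] → s <+: t → s ∈ B

/-- The `≺`-maximal members of a set of finite sequences. -/
def maxMembers {Λ : Type v} (B : Set (List Λ)) : Set (List Λ) :=
  {t | t ∈ B ∧ ¬∃ s ∈ B, t <+: s ∧ t ≠ s}

/-- `B' = B \ MAX(B)`, the derived tree. -/
def treeDeriv {Λ : Type v} (B : Set (List Λ)) : Set (List Λ) :=
  {t | t ∈ B ∧ ∃ s ∈ B, t <+: s ∧ t ≠ s}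

/-- Transfinite iterates `B^ζ` of the tree derivation: `B^0 = B`,
`B^{ζ+1} = (B^ζ)'`, with intersections at limit ordinals. -/
def treeIter {Λ : Type v} (B : Set (List Λ)) (o : Ordinal.{0}) : Set (List Λ) :=
  Ordinal.limitRecOn (motive := fun _ => Set (List Λ)) o B (fun _ S => treeDeriv S)
    (fun o' _ f => ⋂ ζ : Set.Iio o', f ζ.1 (Set.mem_Iio.mp ζ.2))

/-- `o(B) = o` : the least ordinal at which the iterated derivation of `B` is empty is `o`. -/
def hasOrder {Λ : Type v} (B : Set (List Λ)) (o : Ordinal.{0}) : Prop :=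
  treeIter B o = ∅ ∧ ∀ ζ : Ordinal.{0}, ζ < o → treeIter B ζ ≠ ∅

/-- The (finite) set of initial segments `s ⪯ t` of `t` which belong to `B`. -/
def branchFinset {Λ : Type v} (B : Set (List Λ)) (t : List Λ) : Finset (List Λ) :=
  t.inits.toFinset.filter fun s => s ∈ B

section WeakTopology

variable {X : Type u} [NormedAddCommGroup X] [NormedSpace ℝ X]

/-- The closure of a set in the weak topology of `X`. -/
def weakClosure (S : Set X) : Set X :=
  ⇑(toWeakSpace ℝ X) ⁻¹' closure (⇑(toWeakSpace ℝ X) '' S)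

/-- The filter of weak neighborhoods of a point of `X`. -/
def weakNhds (x : X) : Filter X :=
  Filter.comap (⇑(toWeakSpace ℝ X)) (𝓝 (toWeakSpace ℝ X x))

/-- The closure of a set of functionals in the weak* topology of `X*`. -/
def wstarClosure (S : Set (StrongDual ℝ X)) : Set (StrongDual ℝ X) :=
  ⇑(StrongDual.toWeakDual (𝕜 := ℝ) (E := X)) ⁻¹'
    closure (⇑(StrongDual.toWeakDual (𝕜 := ℝ) (E := X)) '' S)

/-- The filter of weak* neighborhoods of a functional in `X*`. -/
def wstarNhds (f : StrongDual ℝ X) : Filter (StrongDual ℝ X) :=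
  Filter.comap (⇑(StrongDual.toWeakDual (𝕜 := ℝ) (E := X))) (𝓝 (StrongDual.toWeakDual f))

/-- A set of functionals is weak*-compact if it is compact in the weak* topology. -/
def IsWStarCompact (K : Set (StrongDual ℝ X)) : Prop :=
  IsCompact (⇑(StrongDual.toWeakDual (𝕜 := ℝ) (E := X)) '' K)

/-! ### Szlenk derivations -/

/-- The Szlenk derivation `s_ε(K)`: the points of `K` all of whose weak*
neighborhoods `V` satisfy `diam (V ∩ K) > ε`; by convention `s_ε(K) = K` for `ε ≤ 0`. -/
def szDeriv (ε : ℝ) (K : Set (StrongDual ℝ X)) : Set (StrongDual ℝ X) :=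
  if ε ≤ 0 then K else {f | f ∈ K ∧ ∀ V ∈ wstarNhds f, ε < diam (V ∩ K)}

/-- Transfinite iterates `s_ε^o(K)` of the Szlenk derivation. -/
def szIter (ε : ℝ) (K : Set (StrongDual ℝ X)) (o : Ordinal.{0}) : Set (StrongDual ℝ X) :=
  Ordinal.limitRecOn (motive := fun _ => Set (StrongDual ℝ X)) o K (fun _ S => szDeriv ε S)
    (fun o' _ f => ⋂ ζ : Set.Iio o', f ζ.1 (Set.mem_Iio.mp ζ.2))

/-- `Sz(K) ≤ o`, i.e. for every `ε > 0` the iterated derivation is empty by stage `o`. -/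
def SzLe (K : Set (StrongDual ℝ X)) (o : Ordinal.{0}) : Prop :=
  ∀ ε : ℝ, 0 < ε → szIter ε K o = ∅

/-- `Sz(K) = o`. -/
def SzEq (K : Set (StrongDual ℝ X)) (o : Ordinal.{0}) : Prop :=
  SzLe K o ∧ ∀ ζ : Ordinal.{0}, ζ < o → ∃ ε : ℝ, 0 < ε ∧ szIter ε K ζ ≠ ∅

/-- `s_{ξ,ε}(K) = s_ε^{ω^ξ}(K)`. -/
def szIterXi (ξ : Ordinal.{0}) (ε : ℝ) (K : Set (StrongDual ℝ X)) : Set (StrongDual ℝ X) :=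
  szIter ε K (omega0 ^ ξ)

/-- Iterated application `s_{ξ,ε_1} s_{ξ,ε_2} ⋯ s_{ξ,ε_n}(K)` for a list `[ε_1,…,ε_n]`. -/
def multiDeriv (ξ : Ordinal.{0}) : List ℝ → Set (StrongDual ℝ X) → Set (StrongDual ℝ X)
  | [], K => K
  | e :: l, K => szIterXi ξ e (multiDeriv ξ l K)

/-- `Sz_ξ(K,ε)`: the least `n ∈ ℕ` such that `s_ε^{ω^ξ·n}(K) = ∅` (meaningful when
`Sz(K) ≤ ω^{ξ+1}`, in which case the least such ordinal is a natural number). -/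
def szNat (ξ : Ordinal.{0}) (ε : ℝ) (K : Set (StrongDual ℝ X)) : ℕ :=
  sInf {n : ℕ | szIter ε K (omega0 ^ ξ * n) = ∅}

/-- The ξ-Szlenk power type `p_ξ(K) = limsup_{ε→0⁺} log Sz_ξ(K,ε) / |log ε|`, with
value `∞` when `Sz(K) > ω^{ξ+1}`. -/
def szPower (ξ : Ordinal.{0}) (K : Set (StrongDual ℝ X)) : ℝ≥0∞ :=
  if SzLe K (omega0 ^ (ξ + 1)) then
    Filter.limsup (fun ε : ℝ =>
      ENNReal.ofReal (Real.log (szNat ξ ε K : ℝ) / |Real.log ε|)) (𝓝[>] (0 : ℝ))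
  else ⊤

variable {Y : Type u} [NormedAddCommGroup Y] [NormedSpace ℝ Y]

/-- `A* B_{Y*}`: the image of the closed unit ball of `Y*` under the adjoint of `A`. -/
def adjBall (A : X →L[ℝ] Y) : Set (StrongDual ℝ X) :=
  (fun g : StrongDual ℝ Y => g.comp A) '' Metric.closedBall 0 1

/-- The ξ-Szlenk power type of an operator, `p_ξ(A) = p_ξ(A*B_{Y*})`. -/
def szPowerOp (ξ : Ordinal.{0}) (A : X →L[ℝ] Y) : ℝ≥0∞ :=
  szPower ξ (adjBall A)

/-- The ξ-Szlenk power type of a Banach space, `p_ξ(X) = p_ξ(B_{X*})`. -/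
def szPowerSp (ξ : Ordinal.{0}) (X : Type u) [NormedAddCommGroup X] [NormedSpace ℝ X] : ℝ≥0∞ :=
  szPower ξ (Metric.closedBall (0 : StrongDual ℝ X) 1)

end WeakTopology

section Collections

variable {X Y : Type u} [NormedAddCommGroup X] [NormedSpace ℝ X]
  [NormedAddCommGroup Y] [NormedSpace ℝ Y]

/-- A weakly null collection `(x_t)_{t ∈ B}` : for every ordinal `ζ` and every
`t ∈ (B ∪ {∅})^{ζ+1}`, `0` belongs to the weak closure of `{x_s : s ∈ B^ζ, s⁻ = t}`. -/
def WeaklyNullColl {Λ : Type v} (B : Set (List Λ)) (g : List Λ → X) : Prop :=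
  ∀ ζ : Ordinal.{0}, ∀ t ∈ treeIter (insert [] B) (ζ + 1),
    (0 : X) ∈ weakClosure {x : X | ∃ s ∈ treeIter B ζ, s ≠ [] ∧ s.dropLast = t ∧ x = g s}

/-- A weak*-null collection `(z*_t)_{t ∈ B}` in `Y*`. -/
def WStarNullColl {Λ : Type v} (B : Set (List Λ)) (z : List Λ → StrongDual ℝ Y) : Prop :=
  ∀ ζ : Ordinal.{0}, ∀ t ∈ treeIter (insert [] B) (ζ + 1),
    (0 : StrongDual ℝ Y) ∈ wstarClosure {w : StrongDual ℝ Y | ∃ s ∈ treeIter B ζ, s ≠ [] ∧ s.dropLast = t ∧ w = z s}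

/-- `co(x_s : s ⪯ t, s ∈ B)`, the convex hull of the values along the branch through `t`. -/
def branchHull {Λ : Type v} (B : Set (List Λ)) (g : List Λ → X) (t : List Λ) : Set X :=
  convexHull ℝ {x : X | ∃ s ∈ B, s <+: t ∧ x = g s}

/-! ### Norms and moduli -/

/-- `N` is a norm on `Y`. -/
def IsNormOn (N : Y → ℝ) : Prop :=
  N 0 = 0 ∧ (∀ y : Y, y ≠ 0 → 0 < N y) ∧ (∀ (c : ℝ) (y : Y), N (c • y) = |c| * N y) ∧
    ∀ y z : Y, N (y + z) ≤ N y + N z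

/-- `N` is a norm on `Y` equivalent to the given norm. -/
def IsEquivNorm (N : Y → ℝ) : Prop :=
  IsNormOn N ∧ ∃ c C : ℝ, 0 < c ∧ 0 < C ∧ ∀ y : Y, c * ‖y‖ ≤ N y ∧ N y ≤ C * ‖y‖

/-- `N` is a `2`-equivalent norm on `Y`: `‖y‖/2 ≤ N y ≤ 2‖y‖`. -/
def IsTwoEquivNorm (N : Y → ℝ) : Prop :=
  IsNormOn N ∧ ∀ y : Y, (1 / 2) * ‖y‖ ≤ N y ∧ N y ≤ 2 * ‖y‖

/-- The dual norm on `Y*` of a norm `N` on `Y`. -/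
def dualNormOf (N : Y → ℝ) (g : StrongDual ℝ Y) : ℝ :=
  sSup {r : ℝ | ∃ y : Y, N y ≤ 1 ∧ r = |g y|}

/-- The modulus `ρ_ξ(σ; A : X → (Y,N))` of ξ-asymptotic uniform smoothness of the
operator `A`, where `Y` carries the (equivalent) norm `N`:
`sup inf {N(y + Ax) − 1 : t ∈ B, x ∈ co(x_s : s ⪯ t)}`, the supremum taken over
all `y` in the `N`-unit ball of `Y`, all B-trees `B` with `o(B) = ω^ξ`, and all
weakly null collections `(x_t)_{t ∈ B} ⊆ σ B_X`. -/
def rhoWith (ξ : Ordinal.{0}) (A : X →L[ℝ] Y) (N : Y → ℝ) (σ : ℝ) : ℝ :=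
  sSup {r : ℝ | ∃ y : Y, N y ≤ 1 ∧
    ∃ (Λ : Type (max u 1)) (B : Set (List Λ)) (g : List Λ → X),
      IsBTree B ∧ hasOrder B (omega0 ^ ξ) ∧ WeaklyNullColl B g ∧ (∀ t ∈ B, ‖g t‖ ≤ σ) ∧
      r = sInf {c : ℝ | ∃ t ∈ B, ∃ x ∈ branchHull B g t, c = N (y + A x) - 1}}

/-- `ρ_ξ(σ; A)` with the given norm of `Y`. -/
def rho (ξ : Ordinal.{0}) (A : X →L[ℝ] Y) (σ : ℝ) : ℝ :=
  rhoWith ξ A (fun y => ‖y‖) σ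

/-- `A : X → (Y,N)` is ξ-asymptotically uniformly smooth with power type `p`:
`ρ_ξ(σ;A) ≤ C σ^p` for all `0 < σ ≤ 1`. -/
def AUSWith (ξ : Ordinal.{0}) (A : X →L[ℝ] Y) (N : Y → ℝ) (p : ℝ) : Prop :=
  ∃ C : ℝ, ∀ σ : ℝ, 0 < σ → σ ≤ 1 → rhoWith ξ A N σ ≤ C * σ ^ p

/-- `A : X → (Y,N)` is ξ-asymptotically uniformly smooth with power type `∞`. -/
def AUSInfWith (ξ : Ordinal.{0}) (A : X →L[ℝ] Y) (N : Y → ℝ) : Prop :=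
  ∃ C : ℝ, ∀ (y : Y) (b : ℝ), 0 < b →
    ∀ (Λ : Type (max u 1)) (B : Set (List Λ)) (g : List Λ → X),
      IsBTree B → hasOrder B (omega0 ^ ξ) → WeaklyNullColl B g → (∀ t ∈ B, ‖g t‖ ≤ b) →
      sInf {c : ℝ | ∃ t ∈ B, ∃ x ∈ branchHull B g t, c = N (y + A x)} ≤ max (N y) (C * b)

/-- The set of constants `C > 0` witnessing the quantity `t_{ξ,p}(A)`: for every
`y ∈ Y`, `σ > 0`, every B-tree `B` with `o(B) = ω^ξ` and every weakly null
`(x_t)_{t∈B} ⊆ σ B_X`, `inf {‖y + Ax‖^p} ≤ ‖y‖^p + C σ^p`.  `t_{ξ,p}(A)` itself is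
the infimum of this set. -/
def tConstSet (ξ : Ordinal.{0}) (A : X →L[ℝ] Y) (p : ℝ) : Set ℝ :=
  {C : ℝ | 0 < C ∧ ∀ (y : Y) (σ : ℝ), 0 < σ →
    ∀ (Λ : Type (max u 1)) (B : Set (List Λ)) (g : List Λ → X),
      IsBTree B → hasOrder B (omega0 ^ ξ) → WeaklyNullColl B g → (∀ t ∈ B, ‖g t‖ ≤ σ) →
      sInf {c : ℝ | ∃ t ∈ B, ∃ x ∈ branchHull B g t, c = ‖y + A x‖ ^ p} ≤ ‖y‖ ^ p + C * σ ^ p}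

/-- The set of constants `C > 0` witnessing `t_{ξ,∞}(A)`:
`inf {‖y + Ax‖} ≤ max {‖y‖, C σ}` under the same quantification. -/
def tInfConstSet (ξ : Ordinal.{0}) (A : X →L[ℝ] Y) : Set ℝ :=
  {C : ℝ | 0 < C ∧ ∀ (y : Y) (σ : ℝ), 0 < σ →
    ∀ (Λ : Type (max u 1)) (B : Set (List Λ)) (g : List Λ → X),
      IsBTree B → hasOrder B (omega0 ^ ξ) → WeaklyNullColl B g → (∀ t ∈ B, ‖g t‖ ≤ σ) →
      sInf {c : ℝ | ∃ t ∈ B, ∃ x ∈ branchHull B g t, c = ‖y + A x‖} ≤ max ‖y‖ (C * σ)}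

/-- Modulus `δ^{w*}_ξ(τ; A* : (Y,N)* → X*)` of weak*-ξ-asymptotic uniform convexity
of the adjoint `A*`, with `Y` renormed by `N`: the infimum over `y*` of `N`-dual-norm `1`,
B-trees `B` with `o(B) = ω^ξ`, and weak*-null `(A*,τ)`-large collections `(z*_s)_{s∈B}`
of `sup {N*(y* + Σ_{s ⪯ t} z*_s) − 1 : t ∈ B}`. -/
def deltaWith (ξ : Ordinal.{0}) (A : X →L[ℝ] Y) (N : Y → ℝ) (τ : ℝ) : ℝ :=
  sInf {r : ℝ | ∃ g : StrongDual ℝ Y, dualNormOf N g = 1 ∧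
    ∃ (Λ : Type (max u 1)) (B : Set (List Λ)) (z : List Λ → StrongDual ℝ Y),
      IsBTree B ∧ hasOrder B (omega0 ^ ξ) ∧ WStarNullColl B z ∧
      (∀ s ∈ B, τ < ‖(z s).comp A‖) ∧
      r = sSup {c : ℝ | ∃ t ∈ B, c = dualNormOf N (g + ∑ s ∈ branchFinset B t, z s) - 1}}

/-- `δ^{w*}_ξ(τ; A*)` with the original norm of `Y`. -/
def deltaOp (ξ : Ordinal.{0}) (A : X →L[ℝ] Y) (τ : ℝ) : ℝ :=
  sInf {r : ℝ | ∃ g : StrongDual ℝ Y, ‖g‖ = 1 ∧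
    ∃ (Λ : Type (max u 1)) (B : Set (List Λ)) (z : List Λ → StrongDual ℝ Y),
      IsBTree B ∧ hasOrder B (omega0 ^ ξ) ∧ WStarNullColl B z ∧
      (∀ s ∈ B, τ < ‖(z s).comp A‖) ∧
      r = sSup {c : ℝ | ∃ t ∈ B, c = ‖g + ∑ s ∈ branchFinset B t, z s‖ - 1}}

/-- `A* : (Y,N)* → X*` is weak*-ξ-asymptotically uniformly convex with power type `p`:
`δ^{w*}_ξ(τ;A*) ≥ c τ^p` for all `0 < τ ≤ 1`. -/
def AUCWith (ξ : Ordinal.{0}) (A : X →L[ℝ] Y) (N : Y → ℝ) (p : ℝ) : Prop :=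
  ∃ c : ℝ, 0 < c ∧ ∀ τ : ℝ, 0 < τ → τ ≤ 1 → c * τ ^ p ≤ deltaWith ξ A N τ

/-! ### Space (identity operator) versions, for a renorming `N` of `X` itself. -/

/-- The modulus `ρ_ξ(σ)` of the norm `N` on `X`. -/
def rhoSpace (ξ : Ordinal.{0}) (N : X → ℝ) (σ : ℝ) : ℝ :=
  sSup {r : ℝ | ∃ y : X, N y ≤ 1 ∧
    ∃ (Λ : Type (max u 1)) (B : Set (List Λ)) (g : List Λ → X),
      IsBTree B ∧ hasOrder B (omega0 ^ ξ) ∧ WeaklyNullColl B g ∧ (∀ t ∈ B, N (g t) ≤ σ) ∧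
      r = sInf {c : ℝ | ∃ t ∈ B, ∃ x ∈ branchHull B g t, c = N (y + x) - 1}}

/-- The norm `N` on `X` is ξ-asymptotically uniformly smooth with power type `p`. -/
def AUSSpace (ξ : Ordinal.{0}) (N : X → ℝ) (p : ℝ) : Prop :=
  ∃ C : ℝ, ∀ σ : ℝ, 0 < σ → σ ≤ 1 → rhoSpace ξ N σ ≤ C * σ ^ p

/-- The modulus `δ^{w*}_ξ(τ)` of the dual norm of `N` on `X*`. -/
def deltaSpace (ξ : Ordinal.{0}) (N : X → ℝ) (τ : ℝ) : ℝ :=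
  sInf {r : ℝ | ∃ g : StrongDual ℝ X, dualNormOf N g = 1 ∧
    ∃ (Λ : Type (max u 1)) (B : Set (List Λ)) (z : List Λ → StrongDual ℝ X),
      IsBTree B ∧ hasOrder B (omega0 ^ ξ) ∧ WStarNullColl B z ∧
      (∀ s ∈ B, τ < dualNormOf N (z s)) ∧
      r = sSup {c : ℝ | ∃ t ∈ B, c = dualNormOf N (g + ∑ s ∈ branchFinset B t, z s) - 1}}

/-- The dual norm of `N` on `X*` is weak*-ξ-asymptotically uniformly convex with
power type `p`. -/
def AUCSpace (ξ : Ordinal.{0}) (N : X → ℝ) (p : ℝ) : Prop :=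
  ∃ c : ℝ, 0 < c ∧ ∀ τ : ℝ, 0 < τ → τ ≤ 1 → c * τ ^ p ≤ deltaSpace ξ N τ

end Collections

/-! ### The trees `Γ_ξ`, `Γ_{ξ,n}`, `Γ_{ξ,∞}`, their levels, and the weights `ℙ_ξ`. -/

/-- `ζ + S`: shift every entry of every sequence in `S` by `ζ`. -/
def shiftSet (ζ : Ordinal.{0}) (S : Set (List Ordinal.{0})) : Set (List Ordinal.{0}) :=
  (fun t => t.map fun a => ζ + a) '' S

/-- `gammaStep ξ G n = Γ_{ξ,n+1}` built from `G = Γ_ξ`: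
`Γ_{ξ,1} = Γ_ξ` and `Γ_{ξ,n+1} = (ω^ξ·n + Γ_ξ) ∪ {t ⌢ u : t ∈ MAX(ω^ξ·n + Γ_ξ), u ∈ Γ_{ξ,n}}`. -/
def gammaStep (ξ : Ordinal.{0}) (G : Set (List Ordinal.{0})) : ℕ → Set (List Ordinal.{0})
  | 0 => G
  | n + 1 =>
    shiftSet (omega0 ^ ξ * ((n : Ordinal.{0}) + 1)) G ∪
      {w | ∃ t ∈ maxMembers (shiftSet (omega0 ^ ξ * ((n : Ordinal.{0}) + 1)) G),
        ∃ u ∈ gammaStep ξ G n, w = t ++ u}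

/-- The B-trees `Γ_ξ`: `Γ_0 = {(0)}`, `Γ_{ξ+1} = ⋃_n Γ_{ξ,n}`, and at limit `ξ`,
`Γ_ξ = ⋃_{ζ<ξ} (ω^ζ + Γ_{ζ+1})`. -/
def Gamma (ξ : Ordinal.{0}) : Set (List Ordinal.{0}) :=
  Ordinal.limitRecOn (motive := fun _ => Set (List Ordinal.{0})) ξ
    {[(0 : Ordinal.{0})]}
    (fun ζ G => ⋃ n : ℕ, gammaStep ζ G n)
    (fun _ hξ f => ⋃ η : Set.Iio _,
      shiftSet (omega0 ^ (η.1 : Ordinal.{0}))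
        (f (Order.succ η.1) (hξ.succ_lt (Set.mem_Iio.mp η.2))))

/-- `Γ_{ξ,n}` for `n ≥ 1` (junk value `Γ_ξ` for `n = 0`). -/
def GammaN (ξ : Ordinal.{0}) (n : ℕ) : Set (List Ordinal.{0}) :=
  gammaStep ξ (Gamma ξ) (n - 1)

/-- The level `Λ_{ξ,n,m}` of `Γ_{ξ,n}`: sequences of the form
`(ω^ξ(n−1)+t_1) ⌢ … ⌢ (ω^ξ(n−m)+t_m)` with `t_i ∈ Γ_ξ` nonempty and
`t_1, …, t_{m−1}` maximal in `Γ_ξ`. -/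
def levelN (ξ : Ordinal.{0}) (n m : ℕ) : Set (List Ordinal.{0}) :=
  {w | ∃ ts : Fin m → List Ordinal.{0},
    (∀ i, ts i ∈ Gamma ξ ∧ ts i ≠ []) ∧
    (∀ i : Fin m, (i : ℕ) + 1 < m → ts i ∈ maxMembers (Gamma ξ)) ∧
    w = (List.ofFn fun i : Fin m =>
      (ts i).map fun a => omega0 ^ ξ * ((n - 1 - (i : ℕ) : ℕ) : Ordinal.{0}) + a).flatten}

/-- The level `Λ_{ξ,∞,m}` of `Γ_{ξ,∞}`: sequences
`t_1 ⌢ (ω^ξ + t_2) ⌢ … ⌢ (ω^ξ(m−1) + t_m)` with `t_i ∈ Γ_ξ` nonempty and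
`t_1, …, t_{m−1}` maximal in `Γ_ξ`. -/
def levelInf (ξ : Ordinal.{0}) (m : ℕ) : Set (List Ordinal.{0}) :=
  {w | ∃ ts : Fin m → List Ordinal.{0},
    (∀ i, ts i ∈ Gamma ξ ∧ ts i ≠ []) ∧
    (∀ i : Fin m, (i : ℕ) + 1 < m → ts i ∈ maxMembers (Gamma ξ)) ∧
    w = (List.ofFn fun i : Fin m =>
      (ts i).map fun a => omega0 ^ ξ * ((i : ℕ) : Ordinal.{0}) + a).flatten}

/-- `Γ_{ξ,∞} = ⋃_{m ≥ 1} Λ_{ξ,∞,m}`. -/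
def GammaInf (ξ : Ordinal.{0}) : Set (List Ordinal.{0}) :=
  ⋃ m : ℕ, levelInf ξ (m + 1)

/-- The unit-wise identification `ι` sending a member of `Γ_{ξ,n}` (or `Γ_{ξ,∞}`)
to the member of `Γ_ξ` obtained by unshifting its last unit: the last block of
entries lying in the same `ω^ξ`-range as the final entry, unshifted. -/
def iota (ξ : Ordinal.{0}) (t : List Ordinal.{0}) : List Ordinal.{0} :=
  match t.getLast? with
  | none => []
  | some o =>
    ((t.reverse.takeWhile fun a => decide (a / omega0 ^ ξ = o / omega0 ^ ξ)).reverse).map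
      fun a => a - omega0 ^ ξ * (o / omega0 ^ ξ)

/-- The weights `ℙ_ξ : Γ_ξ → [0,1]`: `ℙ_0 ≡ 1`; `ℙ_{ξ+1}(t) = (1/n) ℙ_ξ(ι_{ξ,n}(t))`
for `t ∈ Γ_{ξ,n}` (here `n` is recovered from the first entry of `t`); at limit `ξ`,
`ℙ_ξ(t) = ℙ_{ζ+1}(t − ω^ζ)` where `t ∈ ω^ζ + Γ_{ζ+1}`, `ζ = log_ω(first entry)`. -/
def Pweight (ξ : Ordinal.{0}) : List Ordinal.{0} → ℝ :=
  Ordinal.limitRecOn (motive := fun _ => List Ordinal.{0} → ℝ) ξ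
    (fun _ => 1)
    (fun ζ Pz t =>
      (((t.headI / omega0 ^ ζ).card.toNat : ℝ) + 1)⁻¹ * Pz (iota ζ t))
    (fun ξ' _ f t =>
      if h : Order.succ (Ordinal.log omega0 t.headI) < ξ' then
        f (Order.succ (Ordinal.log omega0 t.headI)) h
          (t.map fun a => a - omega0 ^ Ordinal.log omega0 t.headI)
      else 0)

section OmegaTrees

variable {X Y : Type u} [NormedAddCommGroup X] [NormedSpace ℝ X]
  [NormedAddCommGroup Y] [NormedSpace ℝ Y]

/-- `D` is a weak neighborhood basis at `0` in `X`, directed by reverse inclusion. -/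
def IsWeakNhdBasis (D : Set (Set X)) : Prop :=
  (∀ U ∈ D, U ∈ weakNhds (0 : X)) ∧ (∀ V ∈ weakNhds (0 : X), ∃ U ∈ D, U ⊆ V) ∧
    ∀ U ∈ D, ∀ V ∈ D, ∃ W ∈ D, W ⊆ U ∩ V

/-- `G·D`: the tree of sequences of pairs whose ordinal coordinates form a member
of `G` and whose second coordinates belong to `D`.  For `G = Γ_ξ` this is `Ω_ξ`,
for `G = Γ_{ξ,n}` it is `Ω_{ξ,n}`, etc. -/
def OmegaOf (D : Set (Set X)) (G : Set (List Ordinal.{0})) :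
    Set (List (Ordinal.{0} × Set X)) :=
  {w | w.map Prod.fst ∈ G ∧ ∀ p ∈ w, p.2 ∈ D}

/-- A collection `(x_t)_{t ∈ Ω}` is normally weakly null: `x_t ∈ U` whenever
`t = t₁ ⌢ (ζ, U)`. -/
def NormallyWNull (Ω : Set (List (Ordinal.{0} × Set X)))
    (g : List (Ordinal.{0} × Set X) → X) : Prop :=
  ∀ w ∈ Ω, ∀ (w₁ : List (Ordinal.{0} × Set X)) (ζ : Ordinal.{0}) (U : Set X),
    w = w₁ ++ [(ζ, U)] → g w ∈ U

/-- The weight `ℙ_ξ(ι_ξ(s))` of a node of an `Ω`-tree (the `D`-coordinates are ignored). -/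
def PweightIota (ξ : Ordinal.{0}) (s : List (Ordinal.{0} × Set X)) : ℝ :=
  Pweight ξ (iota ξ (s.map Prod.fst))

/-- The full special convex combination `Σ_{s ⪯ t, s ∈ Ω} ℙ_ξ(ι_ξ(s)) x_s` along the
branch through `t` (equal to `Σ_i z_i^t` for the special convex blocks `z_i^t`). -/
def branchComb (ξ : Ordinal.{0}) (Ω : Set (List (Ordinal.{0} × Set X)))
    (g : List (Ordinal.{0} × Set X) → X) (t : List (Ordinal.{0} × Set X)) : X :=
  ∑ s ∈ t.inits.toFinset.filter (fun s => s ∈ Ω), PweightIota ξ s • g s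

/-- The special convex block `z_m^t` of `(x_s)` lying on level `m`:
`z_m^t = Σ_{s ⪯ t, s ∈ Λ_{ξ,n,m}} ℙ_ξ(ι_{ξ,n}(s)) x_s`. -/
def levelBlock (ξ : Ordinal.{0}) (n m : ℕ)
    (g : List (Ordinal.{0} × Set X) → X) (t : List (Ordinal.{0} × Set X)) : X :=
  ∑ s ∈ t.inits.toFinset.filter (fun s => s.map Prod.fst ∈ levelN ξ n m),
    PweightIota ξ s • g s

/-- The convex block of `(x_s)` along the branch-segment `t ≺ s ⪯ t'` inside `Ω`. -/
def chainBlock (ξ : Ordinal.{0}) (Ω : Set (List (Ordinal.{0} × Set X)))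
    (g : List (Ordinal.{0} × Set X) → X) (t t' : List (Ordinal.{0} × Set X)) : X :=
  ∑ s ∈ t'.inits.toFinset.filter (fun s => s ∈ Ω ∧ t <+: s ∧ s ≠ t),
    PweightIota ξ s • g s

/-- The property defining `N_ξ(σ; A)` (relative to the weak neighborhood basis `D`):
there is a normally weakly null collection `(x_t)_{t ∈ Ω_{ξ,N+1}} ⊆ σ B_X` with
`‖Σ_{i=1}^{N+1} A z_i^t‖ > 1` for every maximal `t`.  `N_ξ(σ;A)` is the least `N`
with this property. -/
def NxiProp (ξ : Ordinal.{0}) (A : X →L[ℝ] Y) (D : Set (Set X)) (σ : ℝ) (N : ℕ) : Prop :=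
  ∃ g : List (Ordinal.{0} × Set X) → X,
    NormallyWNull (OmegaOf D (GammaN ξ (N + 1))) g ∧
    (∀ t ∈ OmegaOf D (GammaN ξ (N + 1)), ‖g t‖ ≤ σ) ∧
    ∀ t ∈ maxMembers (OmegaOf D (GammaN ξ (N + 1))),
      1 < ‖A (branchComb ξ (OmegaOf D (GammaN ξ (N + 1))) g t)‖

/-- `(u_n)` is `C`-dominated by the unit vector basis of `ℓ_p`. -/
def DominatedLp (u : ℕ → Y) (p C : ℝ) : Prop :=
  ∀ (m : ℕ) (a : ℕ → ℝ),
    ‖∑ n ∈ Finset.range m, a n • u n‖ ≤ C * (∑ n ∈ Finset.range m, |a n| ^ p) ^ (1 / p)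

/-- `(u_n)` is `C`-dominated by the unit vector basis of `c₀`. -/
def DominatedC0 (u : ℕ → Y) (C : ℝ) : Prop :=
  ∀ (m : ℕ) (a : ℕ → ℝ) (b : ℝ), (∀ n ∈ Finset.range m, |a n| ≤ b) →
    ‖∑ n ∈ Finset.range m, a n • u n‖ ≤ C * b

/-- `A` satisfies ξ-`ℓ_p` upper tree estimates: every normally weakly null collection
indexed by `Ω_{ξ,∞}` in `B_X` admits a chain `∅ = t_0 ≺ t_1 ≺ ⋯` through the levels
such that the images under `A` of the special convex blocks are dominated by the unit
vector basis of `ℓ_p`. -/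
def UpperTreeEst (ξ : Ordinal.{0}) (A : X →L[ℝ] Y) (p : ℝ) : Prop :=
  ∀ D : Set (Set X), IsWeakNhdBasis D →
    ∀ g : List (Ordinal.{0} × Set X) → X,
      NormallyWNull (OmegaOf D (GammaInf ξ)) g →
      (∀ t ∈ OmegaOf D (GammaInf ξ), ‖g t‖ ≤ 1) →
      ∃ ts : ℕ → List (Ordinal.{0} × Set X), ts 0 = [] ∧
        (∀ n : ℕ, ts n <+: ts (n + 1) ∧ ts n ≠ ts (n + 1)) ∧
        (∀ n : ℕ, ts (n + 1) ∈ maxMembers (OmegaOf D (levelInf ξ (n + 1)))) ∧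
        ∃ C : ℝ, DominatedLp
          (fun n => A (chainBlock ξ (OmegaOf D (GammaInf ξ)) g (ts n) (ts (n + 1)))) p C

end OmegaTrees

/-! ### ε-largeness of functions on `Γ_ξ` -/

/-- A function `f : Γ_ξ → ℝ` is ε-large: for every `δ > 0` there is a monotone
`θ : Γ_ξ → Γ_ξ` with `f(θ(t)) ≥ ε − δ` for all `t ∈ Γ_ξ`. -/
def IsLarge (ξ : Ordinal.{0}) (f : List Ordinal.{0} → ℝ) (ε : ℝ) : Prop :=
  ∀ δ : ℝ, 0 < δ → ∃ θ : List Ordinal.{0} → List Ordinal.{0},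
    Set.MapsTo θ (Gamma ξ) (Gamma ξ) ∧
    (∀ s t : List Ordinal.{0}, s ∈ Gamma ξ → t ∈ Gamma ξ → s <+: t → s ≠ t →
      θ s <+: θ t ∧ θ s ≠ θ t) ∧
    ∀ t ∈ Gamma ξ, ε - δ ≤ f (θ t)

/-! ### Auxiliary material for Statement 10 -/

section Aux10

/-! #### Generic transfinite iteration -/

section Iter
variable {α : Type*} (F : Set α → Set α)

/-- Generic transfinite iteration of a set-derivation. -/
theorem ordInduction {motive : Ordinal.{0} → Prop} (o : Ordinal.{0}) (H₁ : motive 0)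
    (H₂ : ∀ o, motive o → motive (Order.succ o))
    (H₃ : ∀ o, Order.IsSuccLimit o → (∀ o' < o, motive o') → motive o) : motive o :=
  Ordinal.limitRecOn o H₁ (fun o h => (Ordinal.add_one_eq_succ o) ▸ H₂ o h) H₃

def iterF (K : Set α) (o : Ordinal.{0}) : Set α :=
  Ordinal.limitRecOn (motive := fun _ => Set α) o K (fun _ S => F S)
    (fun o' _ f => ⋂ ζ : Set.Iio o', f ζ.1 (Set.mem_Iio.mp ζ.2))

theorem iterF_zero (K : Set α) : iterF F K 0 = K := Ordinal.limitRecOn_zero ..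

theorem iterF_succ (K : Set α) (o : Ordinal.{0}) :
    iterF F K (Order.succ o) = F (iterF F K o) := Ordinal.limitRecOn_succ ..

theorem iterF_succ' (K : Set α) (o : Ordinal.{0}) :
    iterF F K (o + 1) = F (iterF F K o) := by
  rw [Ordinal.add_one_eq_succ, iterF_succ]

theorem iterF_limit (K : Set α) {o : Ordinal.{0}} (h : Order.IsSuccLimit o) :
    iterF F K o = ⋂ ζ : Set.Iio o, iterF F K ζ.1 :=
  Ordinal.limitRecOn_limit _ _ _ _ h

theorem iterF_subset (hF : ∀ S, F S ⊆ S) (K : Set α) : ∀ o, iterF F K o ⊆ K := by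
  intro o
  induction o using ordInduction with
  | H₁ => rw [iterF_zero]
  | H₂ o ih => rw [iterF_succ]; exact (hF _).trans ih
  | H₃ o ho ih =>
    rw [iterF_limit F K ho]
    exact (Set.iInter_subset _ (⟨0, ho.pos⟩ : Set.Iio o)).trans (ih 0 ho.pos)

theorem iterF_antitone (hF : ∀ S, F S ⊆ S) (K : Set α) :
    ∀ o₂ o₁, o₁ ≤ o₂ → iterF F K o₂ ⊆ iterF F K o₁ := by
  intro o₂
  induction o₂ using ordInduction with
  | H₁ => intro o₁ h; rw [nonpos_iff_eq_zero.mp h]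
  | H₂ o ih =>
    intro o₁ h
    rcases h.lt_or_eq with h | h
    · rw [iterF_succ]
      exact (hF _).trans (ih o₁ (Order.lt_succ_iff.mp h))
    · rw [h]
  | H₃ o ho ih =>
    intro o₁ h
    rcases h.lt_or_eq with h | h
    · rw [iterF_limit F K ho]
      exact Set.iInter_subset (fun ζ : Set.Iio o => iterF F K ζ.1) ⟨o₁, h⟩
    · rw [h]

theorem iterF_pres (P : Set α → Prop) {K : Set α} (hP : P K)
    (hsucc : ∀ S, P S → P (F S))
    (hlim : ∀ (ι : Type 1) [Nonempty ι] (S : ι → Set α), (∀ i, P (S i)) → P (⋂ i, S i)) :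
    ∀ o, P (iterF F K o) := by
  intro o
  induction o using ordInduction with
  | H₁ => rw [iterF_zero]; exact hP
  | H₂ o ih => rw [iterF_succ]; exact hsucc _ ih
  | H₃ o ho ih =>
    rw [iterF_limit F K ho]
    have : Nonempty (Set.Iio o) := ⟨⟨0, ho.pos⟩⟩
    exact hlim _ _ fun ζ => ih ζ.1 ζ.2

theorem iterF_mono (hFm : ∀ S T, S ⊆ T → F S ⊆ F T) {K K' : Set α} (h : K ⊆ K') :
    ∀ o, iterF F K o ⊆ iterF F K' o := by
  intro o
  induction o using ordInduction with
  | H₁ => rw [iterF_zero, iterF_zero]; exact h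
  | H₂ o ih => rw [iterF_succ, iterF_succ]; exact hFm _ _ ih
  | H₃ o ho ih =>
    rw [iterF_limit F K ho, iterF_limit F K' ho]
    exact Set.iInter_mono fun ζ => ih ζ.1 ζ.2

theorem iterF_comm {β : Type*} (F' : Set β → Set β) (Φ : Set α → Set β)
    (hd : ∀ S, Φ (F S) = F' (Φ S))
    (hi : ∀ (ι : Type 1) [Nonempty ι] (S : ι → Set α), Φ (⋂ i, S i) = ⋂ i, Φ (S i))
    (K : Set α) : ∀ o, Φ (iterF F K o) = iterF F' (Φ K) o := by
  intro o
  induction o using ordInduction with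
  | H₁ => rw [iterF_zero, iterF_zero]
  | H₂ o ih => rw [iterF_succ, iterF_succ, hd, ih]
  | H₃ o ho ih =>
    rw [iterF_limit F K ho, iterF_limit F' (Φ K) ho]
    have : Nonempty (Set.Iio o) := ⟨⟨0, ho.pos⟩⟩
    rw [hi]
    exact Set.iInter_congr fun ζ => ih ζ.1 ζ.2

end Iter

/-! #### List prefix helpers -/

section ListHelpers
variable {Λ Λ' : Type*}

theorem length_lt_of_proper_prefix {s t : List Λ} (h : s <+: t) (hne : s ≠ t) :
    s.length < t.length := by
  rcases lt_or_eq_of_le h.length_le with h' | h'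
  · exact h'
  · exact absurd (h.eq_of_length h') hne

theorem map_prefix_iff {f : Λ → Λ'} (hf : Function.Injective f) {s t : List Λ} :
    s.map f <+: t.map f ↔ s <+: t := by
  constructor
  · intro h
    have hl : (s.map f).length = s.length := List.length_map _
    rw [List.prefix_iff_eq_take] at h ⊢
    rw [hl, ← List.map_take] at h
    exact List.map_injective_iff.mpr hf h
  · exact fun h => h.map f

theorem prefix_append_cases {s t u : List Λ} (h : s <+: t ++ u) :
    s <+: t ∨ ∃ u', u' <+: u ∧ s = t ++ u' := by
  have hs : s = (t ++ u).take s.length := List.prefix_iff_eq_take.mp h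
  rw [List.take_append] at hs
  rcases le_or_gt s.length t.length with hl | hl
  · left
    rw [Nat.sub_eq_zero_of_le hl, List.take_zero, List.append_nil] at hs
    exact hs ▸ List.take_prefix _ _
  · right
    rw [List.take_of_length_le (le_of_lt hl)] at hs
    exact ⟨u.take (s.length - t.length), List.take_prefix _ _, hs⟩

end ListHelpers

/-! #### Tree derivation basics -/

section TreeBasics
variable {Λ : Type*}

theorem treeDeriv_subset (B : Set (List Λ)) : treeDeriv B ⊆ B := fun _ ht => ht.1

theorem treeDeriv_mono {B C : Set (List Λ)} (h : B ⊆ C) : treeDeriv B ⊆ treeDeriv C :=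
  fun _ ht => ⟨h ht.1, ht.2.imp fun s hs => ⟨h hs.1, hs.2⟩⟩

theorem treeIter_eq (B : Set (List Λ)) (o : Ordinal.{0}) :
    treeIter B o = iterF treeDeriv B o := rfl

theorem treeIter_subset (B : Set (List Λ)) (o : Ordinal.{0}) : treeIter B o ⊆ B := by
  rw [treeIter_eq]; exact iterF_subset _ treeDeriv_subset B o

theorem treeIter_antitone (B : Set (List Λ)) {o₁ o₂ : Ordinal.{0}} (h : o₁ ≤ o₂) :
    treeIter B o₂ ⊆ treeIter B o₁ := by
  rw [treeIter_eq, treeIter_eq]; exact iterF_antitone _ treeDeriv_subset B o₂ o₁ h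

theorem treeIter_mono {B C : Set (List Λ)} (h : B ⊆ C) (o : Ordinal.{0}) :
    treeIter B o ⊆ treeIter C o := by
  rw [treeIter_eq, treeIter_eq]
  exact iterF_mono _ (fun _ _ => treeDeriv_mono) h o

theorem treeIter_zero (B : Set (List Λ)) : treeIter B 0 = B := iterF_zero _ B

theorem treeIter_succ (B : Set (List Λ)) (o : Ordinal.{0}) :
    treeIter B (Order.succ o) = treeDeriv (treeIter B o) := iterF_succ _ B o

theorem treeIter_succ' (B : Set (List Λ)) (o : Ordinal.{0}) :
    treeIter B (o + 1) = treeDeriv (treeIter B o) := iterF_succ' _ B o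

theorem treeIter_limit (B : Set (List Λ)) {o : Ordinal.{0}} (h : Order.IsSuccLimit o) :
    treeIter B o = ⋂ ζ : Set.Iio o, treeIter B ζ.1 := iterF_limit _ B h

/-- Downward closedness (including the empty sequence). -/
def DC (B : Set (List Λ)) : Prop := ∀ w ∈ B, ∀ v : List Λ, v <+: w → v ∈ B

theorem DC.deriv {B : Set (List Λ)} (h : DC B) : DC (treeDeriv B) := by
  rintro w ⟨hwB, s, hsB, hws, hne⟩ v hv
  refine ⟨h w hwB v hv, s, hsB, hv.trans hws, ?_⟩
  rintro rfl
  exact hne (hws.eq_of_length (le_antisymm hws.length_le hv.length_le))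

theorem DC.treeIter {B : Set (List Λ)} (h : DC B) (o : Ordinal.{0}) : DC (treeIter B o) := by
  rw [treeIter_eq]
  refine iterF_pres _ DC h (fun _ hS => hS.deriv) (fun ι _ S hS => ?_) o
  intro w hw v hv
  exact Set.mem_iInter.mpr fun i => hS i w (Set.mem_iInter.mp hw i) v hv

theorem treeDeriv_insert_nil {B : Set (List Λ)} (hne : B.Nonempty) (h0 : [] ∉ B) :
    treeDeriv (insert [] B) = insert [] (treeDeriv B) := by
  ext t
  constructor
  · rintro ⟨ht, s, hs, hts, htsne⟩
    rcases Set.mem_insert_iff.mp ht with rfl | htB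
    · exact Set.mem_insert _ _
    · refine Set.mem_insert_of_mem _ ⟨htB, s, ?_, hts, htsne⟩
      rcases Set.mem_insert_iff.mp hs with rfl | hsB
      · exact absurd (List.prefix_nil.mp hts) (fun h => h0 (h ▸ htB))
      · exact hsB
  · intro ht
    rcases Set.mem_insert_iff.mp ht with rfl | htB
    · obtain ⟨s, hs⟩ := hne
      exact ⟨Set.mem_insert _ _, s, Set.mem_insert_of_mem _ hs,
        List.nil_prefix, fun h => h0 (h ▸ hs)⟩
    · exact ⟨Set.mem_insert_of_mem _ htB.1, htB.2.elim fun s hs =>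
        ⟨s, Set.mem_insert_of_mem _ hs.1, hs.2⟩⟩

theorem treeIter_insert_nil {B : Set (List Λ)} (h0 : [] ∉ B) :
    ∀ o : Ordinal.{0}, (∀ γ < o, (treeIter B γ).Nonempty) →
      treeIter (insert [] B) o = insert [] (treeIter B o) := by
  intro o
  induction o using ordInduction with
  | H₁ => intro _; rw [treeIter_zero, treeIter_zero]
  | H₂ o ih =>
    intro h
    rw [treeIter_succ, treeIter_succ,
      ih (fun γ hγ => h γ (hγ.trans (Order.lt_succ o))),
      treeDeriv_insert_nil (h o (Order.lt_succ o)) (fun hh => h0 (treeIter_subset B o hh))]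
  | H₃ o ho ih =>
    intro h
    rw [treeIter_limit _ ho, treeIter_limit _ ho]
    ext t
    simp only [Set.mem_iInter, Set.mem_insert_iff]
    constructor
    · intro ht
      by_cases hte : t = []
      · exact Or.inl hte
      · refine Or.inr fun ζ => ?_
        rcases (ih ζ.1 ζ.2 (fun γ hγ => h γ (hγ.trans ζ.2))) ▸ ht ζ with h' | h'
        · exact absurd h' hte
        · exact h'
    · intro ht ζ
      rw [ih ζ.1 ζ.2 (fun γ hγ => h γ (hγ.trans ζ.2))]
      exact ht.imp id fun h' => h' ζ

end TreeBasics

/-! #### `OmegaOf` and `shiftSet` commute with tree derivations -/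

section CommLemmas

variable {X : Type u}

theorem OmegaOf_deriv (D : Set (Set X)) (hD : D.Nonempty) (S : Set (List Ordinal.{0})) :
    OmegaOf D (treeDeriv S) = treeDeriv (OmegaOf D S) := by
  obtain ⟨U₀, hU₀⟩ := hD
  ext w
  constructor
  · rintro ⟨⟨hwS, s, hsS, hpre, hne⟩, hc⟩
    refine ⟨⟨hwS, hc⟩, w ++ (s.drop (w.map Prod.fst).length).map (fun a => (a, U₀)), ?_, ?_, ?_⟩
    · have hds : w.map Prod.fst ++ s.drop (w.map Prod.fst).length = s :=
        List.prefix_iff_eq_append.mp hpre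
      refine ⟨?_, ?_⟩
      · rw [List.map_append, List.map_map]
        have : (Prod.fst ∘ fun a : Ordinal.{0} => (a, U₀)) = id := rfl
        rw [this, List.map_id, hds]
        exact hsS
      · intro p hp
        rcases List.mem_append.mp hp with hp | hp
        · exact hc p hp
        · obtain ⟨a, _, rfl⟩ := List.mem_map.mp hp
          exact hU₀
    · exact List.prefix_append _ _
    · have hd : s.drop (w.map Prod.fst).length ≠ [] := by
        intro hnil
        have hds : w.map Prod.fst ++ s.drop (w.map Prod.fst).length = s :=
          List.prefix_iff_eq_append.mp hpre
        rw [hnil, List.append_nil] at hds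
        exact hne hds
      intro hcontra
      apply hd
      have := congrArg List.length hcontra
      simp only [List.length_append, List.length_map] at this
      rw [List.length_map] at hd ⊢
      exact List.length_eq_zero_iff.mp (by omega)
  · rintro ⟨⟨hwS, hc⟩, w', ⟨hw'S, _⟩, hpre, hne⟩
    refine ⟨⟨hwS, List.map Prod.fst w', hw'S, hpre.map _, ?_⟩, hc⟩
    intro hcontra
    have h1 : w.length < w'.length := length_lt_of_proper_prefix hpre hne
    have := congrArg List.length hcontra
    simp only [List.length_map] at this
    omega

theorem OmegaOf_iInter (D : Set (Set X)) {ι : Type*} [Nonempty ι]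
    (S : ι → Set (List Ordinal.{0})) :
    OmegaOf D (⋂ i, S i) = ⋂ i, OmegaOf D (S i) := by
  ext w
  constructor
  · rintro ⟨h1, h2⟩
    exact Set.mem_iInter.mpr fun i => ⟨Set.mem_iInter.mp h1 i, h2⟩
  · intro h
    have h' : ∀ i, w ∈ OmegaOf D (S i) := fun i => Set.mem_iInter.mp h i
    exact ⟨Set.mem_iInter.mpr fun i => (h' i).1, (h' (Classical.arbitrary ι)).2⟩

theorem OmegaOf_treeIter (D : Set (Set X)) (hD : D.Nonempty) (G : Set (List Ordinal.{0}))
    (o : Ordinal.{0}) : treeIter (OmegaOf D G) o = OmegaOf D (treeIter G o) := by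
  rw [treeIter_eq, treeIter_eq]
  exact (iterF_comm treeDeriv treeDeriv (OmegaOf D) (fun S => OmegaOf_deriv D hD S)
    (fun ι _ S => OmegaOf_iInter D S) G o).symm

theorem OmegaOf_nonempty_iff (D : Set (Set X)) (hD : D.Nonempty)
    (G : Set (List Ordinal.{0})) : (OmegaOf D G).Nonempty ↔ G.Nonempty := by
  obtain ⟨U₀, hU₀⟩ := hD
  constructor
  · rintro ⟨w, hw, -⟩
    exact ⟨w.map Prod.fst, hw⟩
  · rintro ⟨s, hs⟩
    refine ⟨s.map (fun a => (a, U₀)), ?_, ?_⟩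
    · have : (Prod.fst ∘ fun a : Ordinal.{0} => (a, U₀)) = id := rfl
      rw [List.map_map, this, List.map_id]
      exact hs
    · intro p hp
      obtain ⟨a, _, rfl⟩ := List.mem_map.mp hp
      exact hU₀

theorem shiftSet_deriv (ζ : Ordinal.{0}) (S : Set (List Ordinal.{0})) :
    shiftSet ζ (treeDeriv S) = treeDeriv (shiftSet ζ S) := by
  have hf : Function.Injective (fun a : Ordinal.{0} => ζ + a) :=
    fun a b h => add_left_cancel_iff.mp h
  have hm : Function.Injective (List.map (fun a : Ordinal.{0} => ζ + a)) :=
    List.map_injective_iff.mpr hf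
  ext w
  constructor
  · rintro ⟨t, ⟨ht, s, hs, hpre, hne⟩, rfl⟩
    exact ⟨⟨t, ht, rfl⟩, s.map _, ⟨s, hs, rfl⟩, hpre.map _, fun h => hne (hm h)⟩
  · rintro ⟨⟨t, ht, rfl⟩, w', ⟨s, hs, rfl⟩, hpre, hne⟩
    exact ⟨t, ⟨ht, s, hs, (map_prefix_iff hf).mp hpre, fun h => hne (congrArg _ h)⟩, rfl⟩

theorem shiftSet_treeIter (ζ : Ordinal.{0}) (S : Set (List Ordinal.{0})) (o : Ordinal.{0}) :
    treeIter (shiftSet ζ S) o = shiftSet ζ (treeIter S o) := by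
  have hm : Function.Injective (List.map (fun a : Ordinal.{0} => ζ + a)) :=
    List.map_injective_iff.mpr fun a b h => add_left_cancel_iff.mp h
  rw [treeIter_eq, treeIter_eq]
  exact (iterF_comm treeDeriv treeDeriv (shiftSet ζ) (fun S => shiftSet_deriv ζ S)
    (fun ι _ S => hm.injOn.image_iInter_eq) S o).symm

theorem shiftSet_nonempty {ζ : Ordinal.{0}} {S : Set (List Ordinal.{0})} :
    (shiftSet ζ S).Nonempty ↔ S.Nonempty := Set.image_nonempty

end CommLemmas

/-! #### Attached trees and their derivations -/

section Attach
variable {Λ : Type*}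

/-- `A` together with copies of `C` attached at every maximal node of `A`. -/
def attachSet (A C : Set (List Λ)) : Set (List Λ) :=
  A ∪ {w | ∃ t ∈ maxMembers A, ∃ u ∈ C, w = t ++ u}

theorem gammaStep_succ_eq (ξ : Ordinal.{0}) (G : Set (List Ordinal.{0})) (n : ℕ) :
    gammaStep ξ G (n + 1) =
      attachSet (shiftSet (omega0 ^ ξ * ((n : Ordinal.{0}) + 1)) G) (gammaStep ξ G n) := rfl

theorem attachSet_treeIter_superset (A C : Set (List Λ)) (hC : ∀ u ∈ C, u ≠ []) :
    ∀ δ : Ordinal.{0}, (∀ δ' < δ, (treeIter C δ').Nonempty) →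
      attachSet A (treeIter C δ) ⊆ treeIter (attachSet A C) δ := by
  intro δ
  induction δ using ordInduction with
  | H₁ => intro _; rw [treeIter_zero, treeIter_zero]
  | H₂ δ ih =>
    intro h w hw
    have hδ : ∀ δ' < δ, (treeIter C δ').Nonempty :=
      fun δ' h' => h δ' (h'.trans (Order.lt_succ δ))
    have hsub := ih hδ
    have hCne : (treeIter C δ).Nonempty := h δ (Order.lt_succ δ)
    rw [treeIter_succ]
    rcases hw with hwA | ⟨t, htM, u, hu, rfl⟩
    · refine ⟨hsub (Or.inl hwA), ?_⟩
      by_cases hmax : w ∈ maxMembers A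
      · obtain ⟨u, hu⟩ := hCne
        have huC : u ∈ C := treeIter_subset C δ hu
        exact ⟨w ++ u, hsub (Or.inr ⟨w, hmax, u, hu, rfl⟩), List.prefix_append _ _,
          by simpa using hC u huC⟩
      · have hex : ∃ s ∈ A, w <+: s ∧ w ≠ s := by
          by_contra hcon
          exact hmax ⟨hwA, hcon⟩
        obtain ⟨s, hsA, hpre, hne⟩ := hex
        exact ⟨s, hsub (Or.inl hsA), hpre, hne⟩
    · rw [treeIter_succ] at hu
      obtain ⟨huδ, u', hu', hupre, hune⟩ := hu
      exact ⟨hsub (Or.inr ⟨t, htM, u, huδ, rfl⟩),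
        t ++ u', hsub (Or.inr ⟨t, htM, u', hu', rfl⟩),
        (List.prefix_append_right_inj t).mpr hupre,
        fun hh => hune (List.append_cancel_left hh)⟩
  | H₃ δ hlim ih =>
    intro h w hw
    rw [treeIter_limit _ hlim]
    refine Set.mem_iInter.mpr fun ζ => ?_
    have hζ : ∀ δ' < ζ.1, (treeIter C δ').Nonempty := fun δ' h' => h δ' (h'.trans ζ.2)
    refine ih ζ.1 ζ.2 hζ ?_
    rcases hw with hwA | ⟨t, htM, u, hu, rfl⟩
    · exact Or.inl hwA
    · rw [treeIter_limit C hlim] at hu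
      exact Or.inr ⟨t, htM, u, Set.mem_iInter.mp hu ζ, rfl⟩

theorem attachSet_treeIter_add (A C : Set (List Λ)) (hC : ∀ u ∈ C, u ≠ [])
    (δ : Ordinal.{0}) (hne : ∀ δ' < δ, (treeIter C δ').Nonempty) :
    ∀ γ : Ordinal.{0}, treeIter A γ ⊆ treeIter (attachSet A C) (δ + γ) := by
  intro γ
  induction γ using ordInduction with
  | H₁ =>
    rw [add_zero, treeIter_zero]
    exact fun w hw => attachSet_treeIter_superset A C hC δ hne (Or.inl hw)
  | H₂ γ ih =>
    rw [Ordinal.add_succ, treeIter_succ, treeIter_succ]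
    exact treeDeriv_mono ih
  | H₃ γ hγ ih =>
    have hlim2 : Order.IsSuccLimit (δ + γ) := Ordinal.isSuccLimit_add δ hγ
    rw [treeIter_limit A hγ, treeIter_limit _ hlim2]
    intro w hw
    refine Set.mem_iInter.mpr fun η => ?_
    rcases lt_or_ge η.1 δ with hη | hη
    · have h0 : w ∈ treeIter (attachSet A C) (δ + 0) :=
        ih 0 hγ.pos (Set.mem_iInter.mp hw ⟨0, hγ.pos⟩)
      rw [add_zero] at h0
      exact treeIter_antitone _ hη.le h0
    · have heq : δ + (η.1 - δ) = η.1 := Ordinal.add_sub_cancel_of_le hη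
      have hlt : η.1 - δ < γ := by
        have h3 : δ + (η.1 - δ) < δ + γ := by rw [heq]; exact η.2
        exact (add_lt_add_iff_left δ).mp h3
      have := ih (η.1 - δ) hlt (Set.mem_iInter.mp hw ⟨η.1 - δ, hlt⟩)
      rwa [heq] at this

end Attach

/-! #### Structural facts about `Γ_ξ` -/

section GammaFacts

theorem Gamma_zero : Gamma 0 = {[(0 : Ordinal.{0})]} := Ordinal.limitRecOn_zero ..

theorem Gamma_succ (ζ : Ordinal.{0}) :
    Gamma (Order.succ ζ) = ⋃ n : ℕ, gammaStep ζ (Gamma ζ) n := Ordinal.limitRecOn_succ ..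

theorem Gamma_limit {ξ : Ordinal.{0}} (h : Order.IsSuccLimit ξ) :
    Gamma ξ = ⋃ η : Set.Iio ξ,
      shiftSet (omega0 ^ (η.1 : Ordinal.{0})) (Gamma (Order.succ η.1)) :=
  Ordinal.limitRecOn_limit _ _ _ _ h

/-- The combined structural goodness predicate for a set of ordinal lists. -/
def GoodTree (b : Ordinal.{0}) (S : Set (List Ordinal.{0})) : Prop :=
  S.Nonempty ∧ [] ∉ S ∧ (∀ t ∈ S, ∀ s : List Ordinal.{0}, s ≠ [] → s <+: t → s ∈ S) ∧
    ∀ t ∈ S, t.IsChain (· > ·) ∧ ∀ a ∈ t, a < b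

theorem GoodTree.shift {b : Ordinal.{0}} {S : Set (List Ordinal.{0})}
    (h : GoodTree b S) (ζ : Ordinal.{0}) : GoodTree (ζ + b) (shiftSet ζ S) := by
  obtain ⟨hne, h0, hcl, hcb⟩ := h
  refine ⟨hne.image _, ?_, ?_, ?_⟩
  · rintro ⟨t, ht, hmap⟩
    have ht' : t = [] := List.map_eq_nil_iff.mp hmap
    exact h0 (ht' ▸ ht)
  · rintro t ⟨t₀, ht₀, rfl⟩ s hs hpre
    have hs' : s = (t₀.take s.length).map (fun a => ζ + a) := by
      have h1 := List.prefix_iff_eq_take.mp hpre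
      rw [← List.map_take] at h1
      exact h1
    refine ⟨t₀.take s.length, hcl t₀ ht₀ _ ?_ (List.take_prefix _ _), hs'.symm⟩
    intro hnil
    rw [hs', hnil] at hs
    exact hs rfl
  · rintro t ⟨t₀, ht₀, rfl⟩
    constructor
    · rw [List.isChain_map]
      have := (hcb t₀ ht₀).1
      exact List.IsChain.imp (fun a c hac => (add_lt_add_iff_left ζ).mpr hac) this
    · rintro a ha
      obtain ⟨a₀, ha₀, rfl⟩ := List.mem_map.mp ha
      exact (add_lt_add_iff_left ζ).mpr ((hcb t₀ ht₀).2 a₀ ha₀)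

theorem gammaStep_good {ζ : Ordinal.{0}} (hG : GoodTree (omega0 ^ ζ) (Gamma ζ)) :
    ∀ n : ℕ, GoodTree (omega0 ^ ζ * ((n : Ordinal.{0}) + 1)) (gammaStep ζ (Gamma ζ) n) := by
  intro n
  induction n with
  | zero =>
    have : gammaStep ζ (Gamma ζ) 0 = Gamma ζ := rfl
    rw [this]
    simpa [Nat.cast_zero, zero_add, mul_one] using hG
  | succ n ih =>
    rw [gammaStep_succ_eq]
    set δ : Ordinal.{0} := omega0 ^ ζ * ((n : Ordinal.{0}) + 1) with hδ
    have hAgood : GoodTree (δ + omega0 ^ ζ) (shiftSet δ (Gamma ζ)) := hG.shift δ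
    have hcast : (((n : ℕ) + 1 : ℕ) : Ordinal.{0}) = (n : Ordinal.{0}) + 1 := by push_cast; rfl
    have hbound : δ + omega0 ^ ζ = omega0 ^ ζ * ((((n : ℕ) + 1 : ℕ) : Ordinal.{0}) + 1) := by
      rw [hcast, hδ]
      simp only [Ordinal.add_one_eq_succ]
      conv_rhs => rw [Ordinal.mul_succ]
    obtain ⟨hAne, hA0, hAcl, hAcb⟩ := hAgood
    obtain ⟨hCne, hC0, hCcl, hCcb⟩ := ih
    have hAlb : ∀ t ∈ shiftSet δ (Gamma ζ), ∀ a ∈ t, δ ≤ a := by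
      rintro t ⟨t₀, _, rfl⟩ a ha
      obtain ⟨a₀, _, rfl⟩ := List.mem_map.mp ha
      exact le_self_add
    have hCub : ∀ u ∈ gammaStep ζ (Gamma ζ) n, ∀ a ∈ u, a < δ := by
      intro u hu a ha
      exact (hCcb u hu).2 a ha
    constructor
    · exact hAne.imp fun t ht => Or.inl ht
    refine ⟨?_, ?_, ?_⟩
    · rintro (h | ⟨t, htM, u, hu, hequ⟩)
      · exact hA0 h
      · rcases List.append_eq_nil_iff.mp hequ.symm with ⟨-, h2⟩
        exact hC0 (h2 ▸ hu)
    · rintro t (htA | ⟨t₁, ht₁M, u, huC, rfl⟩) s hs hpre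
      · exact Or.inl (hAcl t htA s hs hpre)
      · rcases prefix_append_cases hpre with hst | ⟨u', hu', rfl⟩
        · exact Or.inl (hAcl t₁ ht₁M.1 s hs hst)
        · by_cases hu'e : u' = []
          · rw [hu'e, List.append_nil]
            exact Or.inl ht₁M.1
          · exact Or.inr ⟨t₁, ht₁M, u', hCcl u huC u' hu'e hu', rfl⟩

    · rintro t (htA | ⟨t₁, ht₁M, u, huC, rfl⟩)
      · refine ⟨(hAcb t htA).1, fun a ha => ?_⟩
        rw [← hbound]
        exact (hAcb t htA).2 a ha
      · have hCb' : ∀ a ∈ u, a < omega0 ^ ζ * ((((n : ℕ) + 1 : ℕ) : Ordinal.{0}) + 1) := by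
          intro a ha
          refine lt_of_lt_of_le (hCub u huC a ha) ?_
          rw [hδ, hcast]
          refine mul_le_mul_right ?_ _
          exact le_self_add
        constructor
        · refine List.IsChain.append (hAcb t₁ ht₁M.1).1 (hCcb u huC).1 ?_
          intro x hx y hy
          have hx' : δ ≤ x := hAlb t₁ ht₁M.1 x (List.mem_of_mem_getLast? hx)
          have hy' : y < δ := hCub u huC y (List.mem_of_mem_head? hy)
          exact lt_of_lt_of_le hy' hx'
        · intro a ha
          rcases List.mem_append.mp ha with ha | ha
          · rw [← hbound]
            exact (hAcb t₁ ht₁M.1).2 a ha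
          · exact hCb' a ha

theorem Gamma_good : ∀ ξ : Ordinal.{0}, GoodTree (omega0 ^ ξ) (Gamma ξ) := by
  intro ξ
  induction ξ using ordInduction with
  | H₁ =>
    rw [Gamma_zero]
    refine ⟨⟨[0], rfl⟩, by simp, ?_, ?_⟩
    · rintro t rfl s hs hpre
      obtain ⟨r, hr⟩ := hpre
      match s, hs with
      | [], hs => exact absurd rfl hs
      | a :: s', _ =>
        simp only [List.cons_append, List.cons.injEq] at hr
        obtain ⟨rfl, hr2⟩ := hr
        rcases List.append_eq_nil_iff.mp hr2 with ⟨rfl, -⟩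
        rfl
    · rintro t rfl
      refine ⟨by simp, ?_⟩
      intro a ha
      simp only [List.mem_singleton] at ha
      rw [ha, Ordinal.opow_zero]
      exact zero_lt_one
  | H₂ ζ ih =>
    have hstep := gammaStep_good ih
    rw [Gamma_succ]
    have hblt : ∀ n : ℕ, omega0 ^ ζ * ((n : Ordinal.{0}) + 1) ≤ omega0 ^ Order.succ ζ := by
      intro n
      rw [Ordinal.opow_succ]
      refine mul_le_mul_right ?_ _
      have : ((n : Ordinal.{0}) + 1) < omega0 := by
        have := Ordinal.nat_lt_omega0 (n + 1)
        push_cast at this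
        exact this
      exact this.le
    refine ⟨?_, ?_, ?_, ?_⟩
    · obtain ⟨t, ht⟩ := (hstep 0).1
      exact ⟨t, Set.mem_iUnion.mpr ⟨0, ht⟩⟩
    · intro h
      obtain ⟨n, hn⟩ := Set.mem_iUnion.mp h
      exact (hstep n).2.1 hn
    · intro t ht s hs hpre
      obtain ⟨n, hn⟩ := Set.mem_iUnion.mp ht
      exact Set.mem_iUnion.mpr ⟨n, (hstep n).2.2.1 t hn s hs hpre⟩
    · intro t ht
      obtain ⟨n, hn⟩ := Set.mem_iUnion.mp ht
      refine ⟨((hstep n).2.2.2 t hn).1, fun a ha => ?_⟩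
      exact lt_of_lt_of_le (((hstep n).2.2.2 t hn).2 a ha) (hblt n)
  | H₃ ξ hlim ih =>
    have h1 : Nonempty (Set.Iio ξ) := ⟨⟨0, hlim.pos⟩⟩
    rw [Gamma_limit hlim]
    have hcomp : ∀ η : Set.Iio ξ, GoodTree (omega0 ^ (η.1 : Ordinal.{0}) + omega0 ^ Order.succ η.1)
        (shiftSet (omega0 ^ (η.1 : Ordinal.{0})) (Gamma (Order.succ η.1))) :=
      fun η => (ih (Order.succ η.1) (hlim.succ_lt η.2)).shift _
    have hble : ∀ η : Set.Iio ξ,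
        ∀ a : Ordinal.{0}, a < omega0 ^ (η.1 : Ordinal.{0}) + omega0 ^ Order.succ η.1 →
          a < omega0 ^ ξ := by
      intro η a ha
      have h2 : omega0 ^ (η.1 : Ordinal.{0}) + omega0 ^ Order.succ η.1 ≤ omega0 ^ ξ := by
        have hp : Ordinal.Principal (· + ·) (omega0 ^ ξ) :=
          Ordinal.principal_add_omega0_opow ξ
        have ha1 : omega0 ^ (η.1 : Ordinal.{0}) < omega0 ^ ξ :=
          (Ordinal.opow_lt_opow_iff_right Ordinal.one_lt_omega0).mpr η.2
        have ha2 : omega0 ^ Order.succ η.1 < omega0 ^ ξ :=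
          (Ordinal.opow_lt_opow_iff_right Ordinal.one_lt_omega0).mpr (hlim.succ_lt η.2)
        exact (hp ha1 ha2).le
      exact lt_of_lt_of_le ha h2
    refine ⟨?_, ?_, ?_, ?_⟩
    · obtain ⟨η⟩ := h1
      obtain ⟨t, ht⟩ := (hcomp η).1
      exact ⟨t, Set.mem_iUnion.mpr ⟨η, ht⟩⟩
    · intro h
      obtain ⟨η, hη⟩ := Set.mem_iUnion.mp h
      exact (hcomp η).2.1 hη
    · intro t ht s hs hpre
      obtain ⟨η, hη⟩ := Set.mem_iUnion.mp ht
      exact Set.mem_iUnion.mpr ⟨η, (hcomp η).2.2.1 t hη s hs hpre⟩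
    · intro t ht
      obtain ⟨η, hη⟩ := Set.mem_iUnion.mp ht
      refine ⟨((hcomp η).2.2.2 t hη).1, fun a ha => ?_⟩
      exact hble η a (((hcomp η).2.2.2 t hη).2 a ha)

theorem Gamma_isBTree (ξ : Ordinal.{0}) : IsBTree (Gamma ξ) :=
  ⟨(Gamma_good ξ).2.1, (Gamma_good ξ).2.2.1⟩

theorem Gamma_treeIter_nonempty :
    ∀ ξ : Ordinal.{0}, ∀ γ < omega0 ^ ξ, (treeIter (Gamma ξ) γ).Nonempty := by
  intro ξ
  induction ξ using ordInduction with
  | H₁ =>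
    intro γ hγ
    rw [Ordinal.opow_zero, Ordinal.lt_one_iff_zero] at hγ
    rw [hγ, treeIter_zero]
    exact (Gamma_good 0).1
  | H₂ ζ ih =>
    have hG := Gamma_good ζ
    have hstep := gammaStep_good hG
    have hS : ∀ n : ℕ, ∀ γ < omega0 ^ ζ * ((n : Ordinal.{0}) + 1),
        (treeIter (gammaStep ζ (Gamma ζ) n) γ).Nonempty := by
      intro n
      induction n with
      | zero =>
        intro γ hγ
        have : gammaStep ζ (Gamma ζ) 0 = Gamma ζ := rfl
        rw [this]
        refine ih γ ?_
        simpa [Nat.cast_zero, zero_add, mul_one] using hγ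
      | succ n ihn =>
        intro γ hγ
        rw [gammaStep_succ_eq]
        set δ : Ordinal.{0} := omega0 ^ ζ * ((n : Ordinal.{0}) + 1) with hδ
        have hCne0 : ∀ u ∈ gammaStep ζ (Gamma ζ) n, u ≠ [] := by
          intro u hu hnil
          exact (hstep n).2.1 (hnil ▸ hu)
        have hcast : (((n : ℕ) + 1 : ℕ) : Ordinal.{0}) = (n : Ordinal.{0}) + 1 := by
          push_cast; rfl
        have hmulsucc : omega0 ^ ζ * ((((n : ℕ) + 1 : ℕ) : Ordinal.{0}) + 1) = δ + omega0 ^ ζ := by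
          rw [hcast, hδ]
          simp only [Ordinal.add_one_eq_succ]
          conv_lhs => rw [Ordinal.mul_succ]
        have hγ' : γ < δ + omega0 ^ ζ := by
          rw [← hmulsucc]
          exact hγ
        rcases lt_or_ge γ δ with hc | hc
        · have hattach := attachSet_treeIter_superset
            (shiftSet δ (Gamma ζ)) (gammaStep ζ (Gamma ζ) n) hCne0 γ
            (fun δ' hδ' => ihn δ' (hδ'.trans hc))
          obtain ⟨t, ht⟩ := (shiftSet_nonempty (ζ := δ) (S := Gamma ζ)).mpr hG.1
          exact ⟨t, hattach (Or.inl ht)⟩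
        · have heq : δ + (γ - δ) = γ := Ordinal.add_sub_cancel_of_le hc
          have hlt : γ - δ < omega0 ^ ζ := by
            have h3 : δ + (γ - δ) < δ + omega0 ^ ζ := by rw [heq]; exact hγ'
            exact (add_lt_add_iff_left δ).mp h3
          have hattach := attachSet_treeIter_add
            (shiftSet δ (Gamma ζ)) (gammaStep ζ (Gamma ζ) n) hCne0 δ
            (fun δ' hδ' => ihn δ' hδ') (γ - δ)
          have hsne : (treeIter (shiftSet δ (Gamma ζ)) (γ - δ)).Nonempty := by
            rw [shiftSet_treeIter]
            exact shiftSet_nonempty.mpr (ih (γ - δ) hlt)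
          obtain ⟨t, ht⟩ := hsne
          exact ⟨t, heq ▸ hattach ht⟩
    intro γ hγ
    rw [Ordinal.opow_succ] at hγ
    have hω : omega0 ^ ζ ≠ 0 := Ordinal.opow_ne_zero ζ Ordinal.omega0_ne_zero
    have hq : γ / omega0 ^ ζ < omega0 := (Ordinal.div_lt hω).mpr hγ
    obtain ⟨n, hn⟩ := Ordinal.lt_omega0.mp hq
    have hγn : γ < omega0 ^ ζ * ((n : Ordinal.{0}) + 1) := by
      have h1 : omega0 ^ ζ * (γ / omega0 ^ ζ) + γ % omega0 ^ ζ = γ := Ordinal.div_add_mod γ _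
      have h2 : γ % omega0 ^ ζ < omega0 ^ ζ := Ordinal.mod_lt γ hω
      calc γ = omega0 ^ ζ * (γ / omega0 ^ ζ) + γ % omega0 ^ ζ := h1.symm
        _ < omega0 ^ ζ * (γ / omega0 ^ ζ) + omega0 ^ ζ := (add_lt_add_iff_left _).mpr h2
        _ = omega0 ^ ζ * ((n : Ordinal.{0}) + 1) := by
            rw [hn, ← Ordinal.mul_succ, Ordinal.add_one_eq_succ]
    obtain ⟨t, ht⟩ := hS n γ hγn
    refine ⟨t, treeIter_mono ?_ γ ht⟩
    rw [Gamma_succ]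
    exact Set.subset_iUnion (fun n : ℕ => gammaStep ζ (Gamma ζ) n) n
  | H₃ ξ hlim ih =>
    intro γ hγ
    obtain ⟨η, hη, hγη⟩ := (Ordinal.lt_opow_of_isSuccLimit Ordinal.omega0_ne_zero hlim).mp hγ
    have hγη' : γ < omega0 ^ Order.succ η :=
      lt_of_lt_of_le hγη (Ordinal.opow_le_opow_right Ordinal.omega0_pos (Order.le_succ η))
    have hne : (treeIter (shiftSet (omega0 ^ η) (Gamma (Order.succ η))) γ).Nonempty := by
      rw [shiftSet_treeIter]
      exact shiftSet_nonempty.mpr (ih (Order.succ η) (hlim.succ_lt hη) γ hγη')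
    obtain ⟨t, ht⟩ := hne
    refine ⟨t, treeIter_mono ?_ γ ht⟩
    rw [Gamma_limit hlim]
    exact Set.subset_iUnion
      (fun η' : Set.Iio ξ => shiftSet (omega0 ^ (η'.1 : Ordinal.{0})) (Gamma (Order.succ η'.1)))
      ⟨η, hη⟩

end GammaFacts

/-! #### Weak-star topology helpers -/

section WStarTopology
variable {X : Type u} [NormedAddCommGroup X] [NormedSpace ℝ X]

/-- The canonical map to the weak-star dual. -/
def jw : StrongDual ℝ X → WeakDual ℝ X := ⇑(StrongDual.toWeakDual (𝕜 := ℝ) (E := X))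

theorem jw_injective : Function.Injective (jw (X := X)) :=
  (StrongDual.toWeakDual (𝕜 := ℝ) (E := X)).injective

theorem jw_apply (φ : StrongDual ℝ X) (x : X) : jw φ x = φ x := rfl

theorem wstarNhds_eq (φ : StrongDual ℝ X) : wstarNhds φ = Filter.comap jw (𝓝 (jw φ)) := rfl

theorem mem_wstarClosure_iff (φ : StrongDual ℝ X) (S : Set (StrongDual ℝ X)) :
    φ ∈ wstarClosure S ↔ jw φ ∈ closure (jw '' S) := Iff.rfl

theorem subset_wstarClosure (S : Set (StrongDual ℝ X)) : S ⊆ wstarClosure S := fun φ hφ =>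
  (mem_wstarClosure_iff φ S).mpr (subset_closure (Set.mem_image_of_mem _ hφ))

theorem wstarClosure_mono {S T : Set (StrongDual ℝ X)} (h : S ⊆ T) :
    wstarClosure S ⊆ wstarClosure T := fun φ hφ =>
  (mem_wstarClosure_iff φ T).mpr (closure_mono (Set.image_mono h) ((mem_wstarClosure_iff φ S).mp hφ))

theorem le_of_mem_wstarClosure {S : Set (StrongDual ℝ X)} {φ : StrongDual ℝ X} (hφ : φ ∈ wstarClosure S)
    {a : ℝ} {v : X} (h : ∀ ψ ∈ S, a ≤ ψ v) : a ≤ φ v := by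
  have hcl : IsClosed {ψ : WeakDual ℝ X | a ≤ ψ v} :=
    isClosed_le continuous_const (WeakDual.eval_continuous v)
  have hsub : jw '' S ⊆ {ψ : WeakDual ℝ X | a ≤ ψ v} := by
    rintro ψ ⟨ψ₀, hψ₀, rfl⟩
    exact h ψ₀ hψ₀
  exact closure_minimal hsub hcl ((mem_wstarClosure_iff _ _).mp hφ)

theorem mem_of_mem_wstarNhds {φ : StrongDual ℝ X} {V : Set (StrongDual ℝ X)} (h : V ∈ wstarNhds φ) :
    φ ∈ V := by
  rw [wstarNhds_eq] at h
  obtain ⟨W, hW, hsub⟩ := Filter.mem_comap.mp h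
  exact hsub (@mem_of_mem_nhds (WeakDual ℝ X) _ _ _ hW)

theorem IsWStarCompact.isBoundedK [CompleteSpace X] {K : Set (StrongDual ℝ X)}
    (hK : IsWStarCompact K) : Bornology.IsBounded K := by
  have hKc : IsCompact (jw '' K) := hK
  rw [isBounded_iff_forall_norm_le]
  have hpt : ∀ x : X, ∃ C, ∀ i : ↥K, ‖(i.1 : StrongDual ℝ X) x‖ ≤ C := by
    intro x
    have hcomp : IsCompact ((fun ψ : WeakDual ℝ X => ψ x) '' (jw '' K)) :=
      hKc.image (WeakDual.eval_continuous x)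
    obtain ⟨C, hC⟩ := isBounded_iff_forall_norm_le.mp hcomp.isBounded
    exact ⟨C, fun i => hC _ ⟨jw i.1, Set.mem_image_of_mem _ i.2, rfl⟩⟩
  obtain ⟨C', hC'⟩ := banach_steinhaus (g := fun i : ↥K => (i.1 : X →L[ℝ] ℝ)) hpt
  exact ⟨C', fun φ hφ => hC' ⟨φ, hφ⟩⟩

theorem szIter_eq (ε : ℝ) (K : Set (StrongDual ℝ X)) (o : Ordinal.{0}) :
    szIter ε K o = iterF (szDeriv ε) K o := rfl

theorem szDeriv_subset (ε : ℝ) (S : Set (StrongDual ℝ X)) : szDeriv ε S ⊆ S := by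
  unfold szDeriv
  split_ifs
  · exact subset_rfl
  · exact fun f hf => hf.1

theorem szDeriv_of_pos {ε : ℝ} (hε : 0 < ε) (S : Set (StrongDual ℝ X)) :
    szDeriv ε S = {f | f ∈ S ∧ ∀ V ∈ wstarNhds f, ε < diam (V ∩ S)} :=
  if_neg (not_le.mpr hε)

theorem szIter_zero (ε : ℝ) (K : Set (StrongDual ℝ X)) : szIter ε K 0 = K := iterF_zero _ K

theorem szIter_succ (ε : ℝ) (K : Set (StrongDual ℝ X)) (o : Ordinal.{0}) :
    szIter ε K (Order.succ o) = szDeriv ε (szIter ε K o) := iterF_succ _ K o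

theorem szIter_limit (ε : ℝ) (K : Set (StrongDual ℝ X)) {o : Ordinal.{0}} (h : Order.IsSuccLimit o) :
    szIter ε K o = ⋂ ζ : Set.Iio o, szIter ε K ζ.1 := iterF_limit _ K h

theorem szIter_subset (ε : ℝ) (K : Set (StrongDual ℝ X)) (o : Ordinal.{0}) : szIter ε K o ⊆ K :=
  iterF_subset _ (szDeriv_subset ε) K o

theorem szIter_antitone (ε : ℝ) (K : Set (StrongDual ℝ X)) {o₁ o₂ : Ordinal.{0}} (h : o₁ ≤ o₂) :
    szIter ε K o₂ ⊆ szIter ε K o₁ :=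
  iterF_antitone _ (szDeriv_subset ε) K o₂ o₁ h

theorem jw_image_szDeriv_closed {ε : ℝ} (hε : 0 < ε) {S Kb : Set (StrongDual ℝ X)}
    (hbd : Bornology.IsBounded Kb) (hSK : S ⊆ Kb) (hcl : IsClosed (jw '' S)) :
    IsClosed (jw '' szDeriv ε S) := by
  have heq : jw '' szDeriv ε S =
      (jw '' S) \ ⋃₀ {W : Set (WeakDual ℝ X) | IsOpen W ∧ diam (jw ⁻¹' W ∩ S) ≤ ε} := by
    ext y
    constructor
    · rintro ⟨φ, hφ, rfl⟩
      rw [szDeriv_of_pos hε] at hφ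
      refine ⟨Set.mem_image_of_mem _ hφ.1, ?_⟩
      rintro ⟨W, ⟨hWopen, hWd⟩, hyW⟩
      have hV : jw ⁻¹' W ∈ wstarNhds φ := by
        rw [wstarNhds_eq]
        exact Filter.preimage_mem_comap (hWopen.mem_nhds hyW)
      exact absurd hWd (not_le.mpr (hφ.2 _ hV))
    · rintro ⟨⟨φ, hφS, rfl⟩, hyO⟩
      refine ⟨φ, ?_, rfl⟩
      rw [szDeriv_of_pos hε]
      refine ⟨hφS, fun V hV => ?_⟩
      rw [wstarNhds_eq] at hV
      obtain ⟨W', hW', hWsub⟩ := Filter.mem_comap.mp hV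
      have hyW : jw φ ∈ interior W' := mem_interior_iff_mem_nhds.mpr hW'
      have hd : ¬ diam (jw ⁻¹' interior W' ∩ S) ≤ ε := by
        intro hcon
        exact hyO ⟨interior W', ⟨isOpen_interior, hcon⟩, hyW⟩
      have hVS : jw ⁻¹' interior W' ∩ S ⊆ V ∩ S :=
        Set.inter_subset_inter_left S ((Set.preimage_mono interior_subset).trans hWsub)
      refine lt_of_lt_of_le (not_le.mp hd) (diam_mono hVS (hbd.subset ?_))
      exact Set.inter_subset_right.trans hSK
  rw [heq]
  exact hcl.sdiff (isOpen_sUnion fun W hW => hW.1)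

theorem szIter_closed_subset {ε : ℝ} (hε : 0 < ε) {K : Set (StrongDual ℝ X)}
    [CompleteSpace X] (hK : IsWStarCompact K) (o : Ordinal.{0}) :
    IsClosed (jw '' szIter ε K o) ∧ szIter ε K o ⊆ K := by
  have hKc : IsCompact (jw '' K) := hK
  rw [szIter_eq]
  refine iterF_pres _ (fun S => IsClosed (jw '' S) ∧ S ⊆ K) ⟨hKc.isClosed, subset_rfl⟩ ?_ ?_ o
  · rintro S ⟨h1, h2⟩
    exact ⟨jw_image_szDeriv_closed hε hK.isBoundedK h2 h1, (szDeriv_subset ε S).trans h2⟩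
  · intro ι _ S hS
    constructor
    · rw [jw_injective.injOn.image_iInter_eq]
      exact isClosed_iInter fun i => (hS i).1
    · exact (Set.iInter_subset S (Classical.arbitrary ι)).trans (hS _).2

theorem abs_lt_mem_weakNhds (φ : StrongDual ℝ X) {δ : ℝ} (hδ : 0 < δ) :
    {x : X | |φ x| < δ} ∈ weakNhds (0 : X) := by
  have hc : Continuous fun y : WeakSpace ℝ X => |((topDualPairing ℝ X).flip) y φ| :=
    (WeakBilin.eval_continuous _ φ).abs
  have hopen : IsOpen {y : WeakSpace ℝ X | |((topDualPairing ℝ X).flip) y φ| < δ} :=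
    isOpen_lt hc continuous_const
  have hmem : (toWeakSpace ℝ X) (0 : X) ∈
      {y : WeakSpace ℝ X | |((topDualPairing ℝ X).flip) y φ| < δ} := by
    show |φ (0 : X)| < δ
    simpa using hδ
  refine Filter.mem_comap.mpr ⟨_, hopen.mem_nhds hmem, ?_⟩
  intro x hx
  exact hx

end WStarTopology

/-! #### Coordinate-independence and maximal extensions in `Ω` -/

section OmegaStructure
variable {X : Type u}

/-- Invariance of a set of `Ω`-nodes under change of `D`-coordinates. -/
def InvD (D : Set (Set X)) (S : Set (List (Ordinal.{0} × Set X))) : Prop :=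
  (∀ w ∈ S, ∀ p ∈ w, p.2 ∈ D) ∧
  ∀ w ∈ S, ∀ w' : List (Ordinal.{0} × Set X),
    w'.map Prod.fst = w.map Prod.fst → (∀ p ∈ w', p.2 ∈ D) → w' ∈ S

theorem InvD.deriv {D : Set (Set X)} {S : Set (List (Ordinal.{0} × Set X))}
    (h : InvD D S) : InvD D (treeDeriv S) := by
  obtain ⟨h1, h2⟩ := h
  constructor
  · exact fun w hw => h1 w hw.1
  · rintro w ⟨hwS, s, hsS, hpre, hne⟩ w' hmap hc
    have hws : w ++ s.drop w.length = s := List.prefix_iff_eq_append.mp hpre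
    have hdropne : s.drop w.length ≠ [] := by
      have hlen := length_lt_of_proper_prefix hpre hne
      intro hnil
      have := congrArg List.length hnil
      simp only [List.length_drop, List.length_nil] at this
      omega
    refine ⟨h2 w hwS w' hmap hc, w' ++ s.drop w.length, ?_, List.prefix_append _ _, ?_⟩
    · refine h2 s hsS _ ?_ ?_
      · rw [List.map_append, hmap, ← List.map_append, hws]
      · intro p hp
        rcases List.mem_append.mp hp with hp | hp
        · exact hc p hp
        · exact h1 s hsS p (List.mem_of_mem_drop hp)
    · intro hcontra
      have := congrArg List.length hcontra
      simp only [List.length_append] at this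
      exact hdropne (List.length_eq_zero_iff.mp (by omega))

theorem InvD.iInterD {D : Set (Set X)} {ι : Type 1} [Nonempty ι]
    {S : ι → Set (List (Ordinal.{0} × Set X))} (h : ∀ i, InvD D (S i)) :
    InvD D (⋂ i, S i) := by
  constructor
  · intro w hw p hp
    exact (h (Classical.arbitrary ι)).1 w (Set.mem_iInter.mp hw _) p hp
  · intro w hw w' hmap hc
    exact Set.mem_iInter.mpr fun i => (h i).2 w (Set.mem_iInter.mp hw i) w' hmap hc

theorem InvD_insert_omega (D : Set (Set X)) (ξ : Ordinal.{0}) :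
    InvD D (insert [] (OmegaOf D (Gamma ξ))) := by
  constructor
  · intro w hw p hp
    rcases Set.mem_insert_iff.mp hw with rfl | hwΩ
    · exact absurd hp List.not_mem_nil
    · exact hwΩ.2 p hp
  · intro w hw w' hmap hc
    rcases Set.mem_insert_iff.mp hw with rfl | hwΩ
    · have : w' = [] := by
        have := congrArg List.length hmap
        simpa using this
      rw [this]
      exact Set.mem_insert _ _
    · refine Set.mem_insert_of_mem _ ⟨?_, hc⟩
      rw [hmap]
      exact hwΩ.1

theorem InvD_treeIter (D : Set (Set X)) (ξ : Ordinal.{0}) (o : Ordinal.{0}) :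
    InvD D (treeIter (insert [] (OmegaOf D (Gamma ξ))) o) := by
  rw [treeIter_eq]
  exact iterF_pres _ (InvD D) (InvD_insert_omega D ξ) (fun S hS => hS.deriv)
    (fun ι _ S hS => InvD.iInterD hS) o

theorem DC_insert_omega (D : Set (Set X)) (ξ : Ordinal.{0}) :
    DC (insert [] (OmegaOf D (Gamma ξ))) := by
  intro w hw v hv
  rcases Set.mem_insert_iff.mp hw with rfl | hwΩ
  · rw [List.prefix_nil.mp hv]
    exact Set.mem_insert _ _
  · by_cases hv0 : v = []
    · rw [hv0]; exact Set.mem_insert _ _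
    · refine Set.mem_insert_of_mem _ ⟨?_, ?_⟩
      · refine (Gamma_isBTree ξ).2 _ hwΩ.1 _ ?_ (hv.map _)
        intro hnil
        exact hv0 (List.map_eq_nil_iff.mp hnil)
      · exact fun p hp => hwΩ.2 p (hv.sublist.subset hp)

/-- The ordinal coordinate of the final entry of an `Ω`-node. -/
def lastOrd (t : List (Ordinal.{0} × Set X)) : Ordinal.{0} :=
  (t.map Prod.fst).getD (t.length - 1) 0

theorem lastOrd_lt {t s : List (Ordinal.{0} × Set X)}
    (hchain : (s.map Prod.fst).IsChain (· > ·)) (ht : t ≠ []) (hpre : t <+: s) (hne : t ≠ s) :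
    lastOrd s < lastOrd t := by
  have hpair : (s.map Prod.fst).Pairwise (· > ·) := List.isChain_iff_pairwise.mp hchain
  have hlt : t.length < s.length := length_lt_of_proper_prefix hpre hne
  have ht1 : 0 < t.length := List.length_pos_iff.mpr ht
  have hslen : (s.map Prod.fst).length = s.length := List.length_map _
  have htlen : (t.map Prod.fst).length = t.length := List.length_map _
  have hi : t.length - 1 < (s.map Prod.fst).length := by omega
  have hj : s.length - 1 < (s.map Prod.fst).length := by omega
  have htake : t.map Prod.fst = (s.map Prod.fst).take t.length := by
    have h1 := List.prefix_iff_eq_take.mp (hpre.map Prod.fst)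
    rwa [htlen] at h1
  have h1 : lastOrd t = (s.map Prod.fst)[t.length - 1] := by
    rw [lastOrd, htake, List.getD_eq_getElem _ _ (by rw [List.length_take]; omega)]
    exact List.getElem_take
  have h2 : lastOrd s = (s.map Prod.fst)[s.length - 1] := by
    rw [lastOrd, List.getD_eq_getElem _ _ (by omega)]
  rw [h1, h2]
  have hget := List.pairwise_iff_get.mp hpair ⟨t.length - 1, hi⟩ ⟨s.length - 1, hj⟩
    (by simp only [Fin.mk_lt_mk]; omega)
  simpa [List.get_eq_getElem] using hget

theorem exists_max_ext {D : Set (Set X)} (ξ : Ordinal.{0})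
    (t : List (Ordinal.{0} × Set X)) (ht : t ∈ insert [] (OmegaOf D (Gamma ξ)))
    (hΩne : (OmegaOf D (Gamma ξ)).Nonempty) :
    ∃ s ∈ maxMembers (OmegaOf D (Gamma ξ)), t <+: s := by
  set Ω := OmegaOf D (Gamma ξ) with hΩ
  have hchain : ∀ u ∈ Ω, (u.map Prod.fst).IsChain (· > ·) :=
    fun u hu => ((Gamma_good ξ).2.2.2 _ hu.1).1
  have h0 : ∀ u ∈ Ω, u ≠ [] := by
    intro u hu hnil
    rw [hnil] at hu
    exact (Gamma_good ξ).2.1 hu.1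
  have main : ∀ o : Ordinal.{0}, ∀ u ∈ Ω, lastOrd u = o → ∃ s ∈ maxMembers Ω, u <+: s := by
    intro o
    induction o using Ordinal.induction with
    | _ o ih =>
      intro u huΩ hlast
      by_cases hmax : u ∈ maxMembers Ω
      · exact ⟨u, hmax, List.prefix_rfl⟩
      · have hex : ∃ s ∈ Ω, u <+: s ∧ u ≠ s := by
          by_contra hcon
          exact hmax ⟨huΩ, hcon⟩
        obtain ⟨s, hsΩ, hpre, hne⟩ := hex
        have hdec : lastOrd s < o :=
          hlast ▸ lastOrd_lt (hchain s hsΩ) (h0 u huΩ) hpre hne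
        obtain ⟨m, hm, hsm⟩ := ih (lastOrd s) hdec s hsΩ rfl
        exact ⟨m, hm, hpre.trans hsm⟩
  rcases Set.mem_insert_iff.mp ht with rfl | htΩ
  · obtain ⟨u, hu⟩ := hΩne
    obtain ⟨m, hm, -⟩ := main (lastOrd u) u hu rfl
    exact ⟨m, hm, List.nil_prefix⟩
  · exact main (lastOrd t) t htΩ rfl

end OmegaStructure

/-! #### The key transfinite induction -/

theorem key_induction {X : Type u} [NormedAddCommGroup X] [NormedSpace ℝ X] [CompleteSpace X]
    (K : Set (StrongDual ℝ X)) (hK : IsWStarCompact K)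
    (ξ : Ordinal.{0}) (D : Set (Set X)) (hD : IsWeakNhdBasis D) (hDne : D.Nonempty)
    (σ ε a : ℝ) (hσ : 0 < σ) (hε : 0 < ε) (haσ : ε * σ < a)
    (g : List (Ordinal.{0} × Set X) → X)
    (hg : NormallyWNull (OmegaOf D (Gamma ξ)) g)
    (hgb : ∀ t ∈ OmegaOf D (Gamma ξ), ‖g t‖ ≤ σ)
    (F : List (Ordinal.{0} × Set X) → StrongDual ℝ X)
    (hF : ∀ t ∈ maxMembers (OmegaOf D (Gamma ξ)), F t ∈ K)
    (hlb : ∀ t ∈ maxMembers (OmegaOf D (Gamma ξ)), ∀ s ∈ OmegaOf D (Gamma ξ),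
      s <+: t → a ≤ F t (g s)) :
    ∀ β : Ordinal.{0}, ∀ t ∈ treeIter (insert [] (OmegaOf D (Gamma ξ))) β,
      ∃ φ ∈ szIter ε K β,
        φ ∈ wstarClosure (F '' {s | s ∈ maxMembers (OmegaOf D (Gamma ξ)) ∧ t <+: s}) := by
  set Ω := OmegaOf D (Gamma ξ) with hΩdef
  have hΩne : Ω.Nonempty := (OmegaOf_nonempty_iff D hDne _).mpr (Gamma_good ξ).1
  have hInvIter : ∀ o : Ordinal.{0}, InvD D (treeIter (insert [] Ω) o) :=
    InvD_treeIter D ξ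
  have hDCiter : ∀ o : Ordinal.{0}, DC (treeIter (insert [] Ω) o) :=
    fun o => (DC_insert_omega D ξ).treeIter o
  intro β
  induction β using ordInduction with
  | H₁ =>
    intro t ht
    rw [treeIter_zero] at ht
    obtain ⟨s, hsM, hts⟩ := exists_max_ext ξ t ht hΩne
    refine ⟨F s, ?_, subset_wstarClosure _ (Set.mem_image_of_mem _ ⟨hsM, hts⟩)⟩
    rw [szIter_zero]
    exact hF s hsM
  | H₂ γ ihβ =>
    intro t ht
    rw [treeIter_succ] at ht
    obtain ⟨htγ, s, hsγ, hpre, hne⟩ := ht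
    have hts : t.length < s.length := length_lt_of_proper_prefix hpre hne
    have hcγ : s.take (t.length + 1) ∈ treeIter (insert [] Ω) γ :=
      hDCiter γ s hsγ _ (List.take_prefix _ _)
    have htc : t <+: s.take (t.length + 1) := by
      rw [List.prefix_iff_eq_take, List.take_take]
      have h1 : min t.length (t.length + 1) = t.length := by omega
      rw [h1]
      exact List.prefix_iff_eq_take.mp hpre
    have hclen : (s.take (t.length + 1)).length = t.length + 1 := by
      rw [List.length_take]; omega
    obtain ⟨r, hr⟩ := htc
    have hrlen : r.length = 1 := by
      have h2 := congrArg List.length hr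
      rw [List.length_append, hclen] at h2
      omega
    obtain ⟨p, rfl⟩ := List.length_eq_one_iff.mp hrlen
    have htD : ∀ q ∈ t, q.2 ∈ D :=
      (hInvIter (Order.succ γ)).1 t (by rw [treeIter_succ]; exact ⟨htγ, s, hsγ, hpre, hne⟩)
    have hbase : t ++ [p] ∈ treeIter (insert [] Ω) γ := by rw [hr]; exact hcγ
    have hchild : ∀ U : ↥D, t ++ [(p.1, U.1)] ∈ treeIter (insert [] Ω) γ := by
      intro U
      refine (hInvIter γ).2 _ hbase _ ?_ ?_
      · simp
      · intro q hq
        rcases List.mem_append.mp hq with hq | hq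
        · exact htD q hq
        · rw [List.mem_singleton.mp hq]
          exact U.2
    have hchildΩ : ∀ U : ↥D, t ++ [(p.1, U.1)] ∈ Ω := by
      intro U
      have hmem := treeIter_subset _ γ (hchild U)
      rcases Set.mem_insert_iff.mp hmem with h | h
      · simp at h
      · exact h
    have hchoice : ∀ U : ↥D, ∃ φ, φ ∈ szIter ε K γ ∧
        φ ∈ wstarClosure (F '' {s' | s' ∈ maxMembers Ω ∧ (t ++ [(p.1, U.1)]) <+: s'}) :=
      fun U => ihβ _ (hchild U)
    choose φf hφf1 hφf2 using hchoice
    have hφfKt : ∀ U : ↥D, φf U ∈ wstarClosure (F '' {s' | s' ∈ maxMembers Ω ∧ t <+: s'}) := by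
      intro U
      refine wstarClosure_mono (Set.image_mono ?_) (hφf2 U)
      rintro s' ⟨h1, h2⟩
      exact ⟨h1, (List.prefix_append _ _).trans h2⟩
    haveI : Nonempty ↥D := ⟨⟨hDne.choose, hDne.choose_spec⟩⟩
    have hKc : IsCompact (jw '' K) := hK
    set C : ↥D → Set (WeakDual ℝ X) := fun U₀ =>
      closure (jw '' {φ | ∃ U : ↥D, U.1 ⊆ U₀.1 ∧ φ = φf U}) ∩
        ((jw '' szIter ε K γ) ∩
          closure (jw '' (F '' {s' | s' ∈ maxMembers Ω ∧ t <+: s'}))) with hCdef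
    have hdir : Directed (· ⊇ ·) C := by
      intro U₁ U₂
      obtain ⟨W, hWD, hWsub⟩ := hD.2.2 U₁.1 U₁.2 U₂.1 U₂.2
      refine ⟨⟨W, hWD⟩, ?_, ?_⟩
      · refine Set.inter_subset_inter_left _ (closure_mono (Set.image_mono ?_))
        rintro φ ⟨U, hU, rfl⟩
        exact ⟨U, hU.trans (hWsub.trans Set.inter_subset_left), rfl⟩
      · refine Set.inter_subset_inter_left _ (closure_mono (Set.image_mono ?_))
        rintro φ ⟨U, hU, rfl⟩
        exact ⟨U, hU.trans (hWsub.trans Set.inter_subset_right), rfl⟩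
    have hnonempty : ∀ U₀, (C U₀).Nonempty := by
      intro U₀
      exact ⟨jw (φf U₀), subset_closure (Set.mem_image_of_mem _ ⟨U₀, subset_rfl, rfl⟩),
        Set.mem_image_of_mem _ (hφf1 U₀), (mem_wstarClosure_iff _ _).mp (hφfKt U₀)⟩
    have hcl : ∀ U₀, IsClosed (C U₀) := fun U₀ =>
      isClosed_closure.inter (((szIter_closed_subset hε hK γ).1).inter isClosed_closure)
    have hcomp : ∀ U₀, IsCompact (C U₀) := fun U₀ =>
      IsCompact.of_isClosed_subset hKc (hcl U₀)
        (fun y hy => (Set.image_mono (szIter_subset ε K γ)) hy.2.1)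
    obtain ⟨y, hy⟩ := IsCompact.nonempty_iInter_of_directed_nonempty_isCompact_isClosed
      C hdir hnonempty hcomp hcl
    obtain ⟨φ, hφγ, hjφ⟩ := (Set.mem_iInter.mp hy (Classical.arbitrary ↥D)).2.1
    refine ⟨φ, ?_, ?_⟩
    · rw [szIter_succ, szDeriv_of_pos hε]
      refine ⟨hφγ, fun V hV => ?_⟩
      set δ : ℝ := (a - ε * σ) / 2 with hδdef
      have hδpos : 0 < δ := by rw [hδdef]; linarith
      have hδlt : ε * σ < a - δ := by rw [hδdef]; linarith
      obtain ⟨U₀, hU₀D, hU₀sub⟩ := hD.2.1 _ (abs_lt_mem_weakNhds φ hδpos)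
      rw [wstarNhds_eq] at hV
      obtain ⟨V', hV', hVsub⟩ := Filter.mem_comap.mp hV
      have hyW : jw φ ∈ interior V' :=
        (@mem_interior_iff_mem_nhds (WeakDual ℝ X) _ _ _).mpr hV'
      have hyC : jw φ ∈ closure (jw '' {φ' | ∃ U : ↥D, U.1 ⊆ U₀ ∧ φ' = φf U}) := by
        have h3 := (Set.mem_iInter.mp hy ⟨U₀, hU₀D⟩).1
        rwa [← hjφ] at h3
      obtain ⟨z, hzW, hz⟩ := ((@_root_.mem_closure_iff (WeakDual ℝ X) _ _ _).mp hyC)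
        (interior V') isOpen_interior hyW
      obtain ⟨φ', ⟨U, hUsub, rfl⟩, hjz⟩ := hz
      have hvU : g (t ++ [(p.1, U.1)]) ∈ U.1 := hg _ (hchildΩ U) t p.1 U.1 rfl
      have hvσ : ‖g (t ++ [(p.1, U.1)])‖ ≤ σ := hgb _ (hchildΩ U)
      have hva : a ≤ φf U (g (t ++ [(p.1, U.1)])) := by
        refine le_of_mem_wstarClosure (hφf2 U) ?_
        rintro ψ ⟨s', hs', rfl⟩
        exact hlb s' hs'.1 _ (hchildΩ U) hs'.2
      have hvφ : |φ (g (t ++ [(p.1, U.1)]))| < δ := hU₀sub (hUsub hvU)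
      have hnorm : ε < ‖φf U - φ‖ := by
        have h1 : a - δ ≤ (φf U - φ) (g (t ++ [(p.1, U.1)])) := by
          have heval : (φf U - φ) (g (t ++ [(p.1, U.1)])) =
              φf U (g (t ++ [(p.1, U.1)])) - φ (g (t ++ [(p.1, U.1)])) :=
            ContinuousLinearMap.sub_apply _ _ _
          rw [heval]
          have habs := abs_lt.mp hvφ
          linarith
        have h2 : (φf U - φ) (g (t ++ [(p.1, U.1)])) ≤ ‖φf U - φ‖ * σ := by
          calc (φf U - φ) (g (t ++ [(p.1, U.1)]))
              ≤ ‖(φf U - φ) (g (t ++ [(p.1, U.1)]))‖ := le_abs_self _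
            _ ≤ ‖φf U - φ‖ * ‖g (t ++ [(p.1, U.1)])‖ := (φf U - φ).le_opNorm _
            _ ≤ ‖φf U - φ‖ * σ := mul_le_mul_of_nonneg_left hvσ (norm_nonneg _)
        exact (mul_lt_mul_iff_left₀ hσ).mp (lt_of_lt_of_le (hδlt.trans_le h1) h2)
      have hφV : φ ∈ V := hVsub ((@interior_subset (WeakDual ℝ X) _ _) hyW)
      have hφ'V : φf U ∈ V := by
        have h4 : jw (φf U) ∈ interior V' := hjz ▸ hzW
        exact hVsub ((@interior_subset (WeakDual ℝ X) _ _) h4)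
      have hbd : Bornology.IsBounded (V ∩ szIter ε K γ) :=
        hK.isBoundedK.subset (Set.inter_subset_right.trans (szIter_subset ε K γ))
      have hdist : dist (φf U) φ ≤ diam (V ∩ szIter ε K γ) :=
        dist_le_diam_of_mem hbd ⟨hφ'V, hφf1 U⟩ ⟨hφV, hφγ⟩
      rw [dist_eq_norm] at hdist
      exact lt_of_lt_of_le hnorm hdist
    · rw [mem_wstarClosure_iff, hjφ]
      exact (Set.mem_iInter.mp hy (Classical.arbitrary ↥D)).2.2
  | H₃ β hlim ihβ =>
    intro t ht
    rw [treeIter_limit _ hlim] at ht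
    haveI hne : Nonempty (Set.Iio β) := ⟨⟨0, hlim.pos⟩⟩
    have hKc : IsCompact (jw '' K) := hK
    set C : Set.Iio β → Set (WeakDual ℝ X) :=
      fun γ => (jw '' szIter ε K γ.1) ∩
        closure (jw '' (F '' {s' | s' ∈ maxMembers Ω ∧ t <+: s'})) with hC
    have hdir : Directed (· ⊇ ·) C := by
      intro γ₁ γ₂
      rcases le_total γ₁.1 γ₂.1 with h | h
      · exact ⟨γ₂, Set.inter_subset_inter_left _ (Set.image_mono (szIter_antitone ε K h)),
          subset_rfl⟩
      · exact ⟨γ₁, subset_rfl,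
          Set.inter_subset_inter_left _ (Set.image_mono (szIter_antitone ε K h))⟩
    have hnonempty : ∀ γ : Set.Iio β, (C γ).Nonempty := by
      intro γ
      obtain ⟨φ, hφ1, hφ2⟩ := ihβ γ.1 γ.2 t (Set.mem_iInter.mp ht γ)
      exact ⟨jw φ, Set.mem_image_of_mem _ hφ1, (mem_wstarClosure_iff _ _).mp hφ2⟩
    have hcl : ∀ γ, IsClosed (C γ) := fun γ =>
      ((szIter_closed_subset hε hK γ.1).1).inter isClosed_closure
    have hcomp : ∀ γ, IsCompact (C γ) := fun γ =>
      IsCompact.of_isClosed_subset hKc (hcl γ)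
        (Set.inter_subset_left.trans (Set.image_mono (szIter_subset ε K γ.1)))
    obtain ⟨y, hy⟩ := IsCompact.nonempty_iInter_of_directed_nonempty_isCompact_isClosed
      C hdir hnonempty hcomp hcl
    obtain ⟨φ, hφ0, hjφ⟩ := (Set.mem_iInter.mp hy ⟨0, hlim.pos⟩).1
    refine ⟨φ, ?_, ?_⟩
    · rw [szIter_limit ε K hlim]
      refine Set.mem_iInter.mpr fun γ => ?_
      obtain ⟨φ', hφ', hjφ'⟩ := (Set.mem_iInter.mp hy γ).1
      rwa [jw_injective (hjφ'.trans hjφ.symm)] at hφ'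
    · rw [mem_wstarClosure_iff, hjφ]
      exact (Set.mem_iInter.mp hy ⟨0, hlim.pos⟩).2

end Aux10
/-- Let `X` be a Banach space, `K ⊆ X*` a nonempty weak*-compact set,
`ξ` an ordinal, `D` a weak neighborhood basis at `0` in `X` directed by reverse
inclusion, and `Ω_ξ = Γ_ξ D`.  Suppose `σ, ε, a > 0` with `a/σ > ε`,
`(x_t)_{t∈Ω_ξ} ⊆ σB_X` is normally weakly null, and `(x*_t)_{t∈MAX(Ω_ξ)} ⊆ K`
satisfies `x*_t(x_s) ≥ a` for every `s ⪯ t ∈ MAX(Ω_ξ)`.  Then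
`s_ε^{ω^ξ}(K) ∩ cl_{w*}{x*_t : t ∈ MAX(Ω_ξ)} ≠ ∅`. -/
theorem statement10 {X : Type u}
    [NormedAddCommGroup X] [NormedSpace ℝ X] [CompleteSpace X]
    (K : Set (StrongDual ℝ X)) (hK : IsWStarCompact K) (hKne : K.Nonempty)
    (ξ : Ordinal.{0}) (D : Set (Set X)) (hD : IsWeakNhdBasis D)
    (σ ε a : ℝ) (hσ : 0 < σ) (hε : 0 < ε) (ha : 0 < a) (haσ : ε < a / σ)
    (g : List (Ordinal.{0} × Set X) → X)
    (hg : NormallyWNull (OmegaOf D (Gamma ξ)) g)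
    (hgb : ∀ t ∈ OmegaOf D (Gamma ξ), ‖g t‖ ≤ σ)
    (F : List (Ordinal.{0} × Set X) → StrongDual ℝ X)
    (hF : ∀ t ∈ maxMembers (OmegaOf D (Gamma ξ)), F t ∈ K)
    (hlb : ∀ t ∈ maxMembers (OmegaOf D (Gamma ξ)), ∀ s ∈ OmegaOf D (Gamma ξ),
      s <+: t → a ≤ F t (g s)) :
    (szIter ε K (omega0 ^ ξ) ∩
      wstarClosure (F '' maxMembers (OmegaOf D (Gamma ξ)))).Nonempty := by
  have hDne : D.Nonempty := by
    obtain ⟨U, hU, -⟩ := hD.2.1 Set.univ Filter.univ_mem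
    exact ⟨U, hU⟩
  have haσ' : ε * σ < a := by
    rw [lt_div_iff₀ hσ] at haσ
    exact haσ
  have hΩ0 : [] ∉ OmegaOf D (Gamma ξ) := fun h => (Gamma_isBTree ξ).1 h.1
  have hnonemp : ∀ γ < omega0 ^ ξ, (treeIter (OmegaOf D (Gamma ξ)) γ).Nonempty := by
    intro γ hγ
    rw [OmegaOf_treeIter D hDne]
    exact (OmegaOf_nonempty_iff D hDne _).mpr (Gamma_treeIter_nonempty ξ γ hγ)
  have hnil : ([] : List (Ordinal.{0} × Set X)) ∈
      treeIter (insert [] (OmegaOf D (Gamma ξ))) (omega0 ^ ξ) := by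
    rw [treeIter_insert_nil hΩ0 (omega0 ^ ξ) hnonemp]
    exact Set.mem_insert _ _
  obtain ⟨φ, hφ1, hφ2⟩ := key_induction K hK ξ D hD hDne σ ε a hσ hε haσ' g hg hgb F hF hlb
    (omega0 ^ ξ) [] hnil
  refine ⟨φ, hφ1, ?_⟩
  have hset : {s | s ∈ maxMembers (OmegaOf D (Gamma ξ)) ∧ [] <+: s} =
      maxMembers (OmegaOf D (Gamma ξ)) := by
    ext s
    simp [List.nil_prefix]
  rwa [hset] at hφ2

end SzlenkPaper
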